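/- arXiv:1804.03630 — 6 statements merged into one kernel-verified Lean document; each statement's English description precedes it below -/
import Mathlib

section
/- For all variables X_1,...,X_n, the following polynomial identity holds: ∏_{1≤i<j≤n}(1+X_i+X_j) · (1 - ∏_{i=1}^n X_i) = Σ_{k=1}^n (1-X_k) · ∏_{1≤i≤n, i≠k} [(1+X_i+X_i X_k)(1-X_i X_k) X_i / (X_i-X_k)] · ∏_{1≤i<j≤n, i,j≠k}(1+X_i+X_j). -/
open Finset Polynomial

section Aux
variable {n : ℕ} {K : Type*} [Field K]

noncomputable def qq (K : Type*) [Field K] : K[X] := X^2 + X + 1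

variable (x : Fin n → K)

noncomputable def fpol (i : Fin n) : K[X] :=
  (C (1 + x i) + C (x i) * X) * (1 - C (x i) * X) * C (x i)

noncomputable def dpol (i : Fin n) : K[X] := (X - C (x i)) * (X + C (1 + x i))

noncomputable def PP : K := ∏ i, ∏ j ∈ Ioi i, (1 + x i + x j)

noncomputable def term (k : Fin n) : K :=
  (1 - x k) *
    (∏ i ∈ univ.erase k, (1 + x i + x i * x k) * (1 - x i * x k) * x i * (x i - x k)⁻¹) *
    ∏ i ∈ univ.erase k, ∏ j ∈ (Ioi i).erase k, (1 + x i + x j)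

noncomputable def Npol : K[X] := C ((-1)^(n+1) * PP x) * (1 + 2*X) * ∏ i, fpol x i
noncomputable def Spol : K[X] := C (PP x * ∏ i, x i) * (1 + 2*X)
noncomputable def Dpol : K[X] := X * (X + C 1) * ∏ i, dpol x i
noncomputable def D0p : K[X] := (X + C 1) * ∏ i, dpol x i
noncomputable def Dm1 : K[X] := X * ∏ i, dpol x i
noncomputable def DXp (k : Fin n) : K[X] :=
  X * (X + C 1) * ((X + C (1 + x k)) * ∏ i ∈ univ.erase k, dpol x i)
noncomputable def DBp (k : Fin n) : K[X] :=
  X * (X + C 1) * ((X - C (x k)) * ∏ i ∈ univ.erase k, dpol x i)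

noncomputable def Epol : K[X] :=
  Npol x - Spol x * Dpol x -
    (C (-PP x) * qq K * D0p x + C (-PP x) * qq K * Dm1 x
      + (∑ k, C (term x k) * qq K * DXp x k) + (∑ k, C (term x k) * qq K * DBp x k))

lemma monic_qq : (qq K).Monic := by unfold qq; monicity!
lemma natDegree_qq : (qq K).natDegree = 2 := by unfold qq; compute_degree!
lemma monic_dpol (i : Fin n) : (dpol x i).Monic := by unfold dpol; monicity!
lemma natDegree_dpol (i : Fin n) : (dpol x i).natDegree = 2 := by
  unfold dpol; compute_degree!

lemma monic_prod_dpol (s : Finset (Fin n)) : (∏ i ∈ s, dpol x i).Monic :=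
  monic_prod_of_monic _ _ (fun i _ => monic_dpol x i)

lemma natDegree_prod_dpol (s : Finset (Fin n)) :
    (∏ i ∈ s, dpol x i).natDegree = 2 * s.card := by
  rw [natDegree_prod_of_monic _ _ (fun i _ => monic_dpol x i)]
  simp [natDegree_dpol, mul_comm]

lemma monic_Dpol : (Dpol x).Monic :=
  ((monic_X.mul (monic_X_add_C 1)).mul (monic_prod_dpol x _))

lemma natDegree_Dpol : (Dpol x).natDegree = 2*n + 2 := by
  have h1 : ((X : K[X]) * (X + C 1)).Monic := monic_X.mul (monic_X_add_C 1)
  rw [Dpol, h1.natDegree_mul (monic_prod_dpol x _), natDegree_prod_dpol]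
  have : ((X : K[X]) * (X + C 1)).natDegree = 2 := by compute_degree!
  rw [this]; simp [card_univ]; ring

lemma monic_D0p : (D0p x).Monic := (monic_X_add_C 1).mul (monic_prod_dpol x _)
lemma monic_Dm1 : (Dm1 x).Monic := monic_X.mul (monic_prod_dpol x _)

lemma natDegree_D0p : (D0p x).natDegree = 2*n + 1 := by
  rw [D0p, (monic_X_add_C 1).natDegree_mul (monic_prod_dpol x _), natDegree_prod_dpol,
    natDegree_X_add_C]
  simp [card_univ]; ring

lemma natDegree_Dm1 : (Dm1 x).natDegree = 2*n + 1 := by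
  rw [Dm1, monic_X.natDegree_mul (monic_prod_dpol x _), natDegree_prod_dpol]
  simp [card_univ]; ring

lemma monic_DXp (k : Fin n) : (DXp x k).Monic :=
  (monic_X.mul (monic_X_add_C 1)).mul ((monic_X_add_C _).mul (monic_prod_dpol x _))

lemma monic_DBp (k : Fin n) : (DBp x k).Monic :=
  (monic_X.mul (monic_X_add_C 1)).mul ((monic_X_sub_C _).mul (monic_prod_dpol x _))

lemma natDegree_DXp (k : Fin n) : (DXp x k).natDegree = 2*n + 1 := by
  have h1 : ((X : K[X]) * (X + C 1)).Monic := monic_X.mul (monic_X_add_C 1)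
  have h1d : ((X : K[X]) * (X + C 1)).natDegree = 2 := by compute_degree!
  rw [DXp, h1.natDegree_mul ((monic_X_add_C _).mul (monic_prod_dpol x _)), h1d,
    (monic_X_add_C _).natDegree_mul (monic_prod_dpol x _), natDegree_prod_dpol,
    natDegree_X_add_C, card_erase_of_mem (mem_univ k)]
  have := k.pos
  simp [card_univ]
  omega

lemma natDegree_DBp (k : Fin n) : (DBp x k).natDegree = 2*n + 1 := by
  have h1 : ((X : K[X]) * (X + C 1)).Monic := monic_X.mul (monic_X_add_C 1)
  have h1d : ((X : K[X]) * (X + C 1)).natDegree = 2 := by compute_degree!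
  rw [DBp, h1.natDegree_mul ((monic_X_sub_C _).mul (monic_prod_dpol x _)), h1d,
    (monic_X_sub_C _).natDegree_mul (monic_prod_dpol x _), natDegree_prod_dpol,
    natDegree_X_sub_C, card_erase_of_mem (mem_univ k)]
  have := k.pos
  simp [card_univ]
  omega

lemma natDegree_fpol_le (i : Fin n) : (fpol x i).natDegree ≤ 2 := by
  unfold fpol; compute_degree

lemma natDegree_Npol_le : (Npol x).natDegree ≤ 2*n + 1 := by
  refine (natDegree_mul_le).trans ?_
  have h2 : (∏ i, fpol x i).natDegree ≤ 2*n := by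
    refine (natDegree_prod_le _ _).trans ?_
    calc (∑ i, (fpol x i).natDegree) ≤ ∑ i : Fin n, 2 :=
          Finset.sum_le_sum fun i _ => natDegree_fpol_le x i
      _ = 2*n := by simp [card_univ, mul_comm]
  have h1 : (C ((-1)^(n+1) * PP x) * (1 + 2*X) : K[X]).natDegree ≤ 1 := by
    compute_degree
  omega


lemma prod_sub_prod_dvd {ι : Type*} (p : K[X]) (s : Finset ι) (f g : ι → K[X]) :
    (∀ i ∈ s, p ∣ f i - g i) → p ∣ (∏ i ∈ s, f i) - ∏ i ∈ s, g i := by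
  classical
  induction s using Finset.induction_on with
  | empty => simp
  | @insert a s ha ih =>
    intro h
    rw [prod_insert ha, prod_insert ha]
    have key : f a * ∏ i ∈ s, f i - g a * ∏ i ∈ s, g i
        = (f a - g a) * ∏ i ∈ s, f i + g a * ((∏ i ∈ s, f i) - ∏ i ∈ s, g i) := by
      ring
    rw [key]
    exact dvd_add (dvd_mul_of_dvd_left (h a (mem_insert_self a s)) _)
      (Dvd.dvd.mul_left (ih (fun i hi => h i (mem_insert_of_mem hi))) _)

lemma qq_dvd_fpol (i : Fin n) : qq K ∣ fpol x i - C ((1 + x i + (x i)^2) * x i) := by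
  have h : fpol x i - C ((1 + x i + (x i)^2) * x i) = -C ((x i)^3) * qq K := by
    unfold fpol qq
    simp only [C_mul, C_add, C_pow, C_1]
    ring
  rw [h]
  exact Dvd.intro_left _ rfl

lemma qq_dvd_prod_fpol :
    qq K ∣ (∏ i, fpol x i) - C (∏ i, ((1 + x i + (x i)^2) * x i)) := by
  rw [map_prod]
  exact prod_sub_prod_dvd _ _ _ _ (fun i _ => qq_dvd_fpol x i)

lemma Xmul_eq : (X * (X + C 1) : K[X]) = qq K - 1 := by
  unfold qq; simp only [C_1]; ring

lemma dpol_eq (i : Fin n) : dpol x i = qq K - C (1 + x i + (x i)^2) := by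
  unfold dpol qq
  simp only [C_add, C_pow, C_1]
  ring

lemma qq_dvd_Dpol :
    qq K ∣ Dpol x - C ((-1)^(n+1) * ∏ i, (1 + x i + (x i)^2)) := by
  have h1 : qq K ∣ (∏ i, dpol x i) - C ((-1)^n * ∏ i, (1 + x i + (x i)^2)) := by
    have h2 : (C ((-1)^n * ∏ i, (1 + x i + (x i)^2)) : K[X])
        = ∏ i : Fin n, (- C (1 + x i + (x i)^2)) := by
      simp only [C_mul, map_prod, C_pow, map_neg, C_1]
      rw [show (∏ i : Fin n, -C (1 + x i + x i ^ 2) : K[X])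
            = ∏ i : Fin n, ((-1) * C (1 + x i + x i ^ 2)) by
          exact Finset.prod_congr rfl fun i _ => (neg_one_mul _).symm,
        Finset.prod_mul_distrib, Finset.prod_const]
      simp [card_univ]
    rw [h2]
    refine prod_sub_prod_dvd _ _ _ _ (fun i _ => ?_)
    rw [dpol_eq, sub_neg_eq_add, sub_add_cancel]
  have key : Dpol x - C ((-1)^(n+1) * ∏ i, (1 + x i + (x i)^2))
      = qq K * (∏ i, dpol x i)
        - ((∏ i, dpol x i) - C ((-1)^n * ∏ i, (1 + x i + (x i)^2))) := by
    rw [Dpol, Xmul_eq]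
    simp only [C_mul, C_pow, map_neg, C_1]
    ring
  rw [key]
  exact dvd_sub (Dvd.intro _ rfl) h1

lemma qq_dvd_NS : qq K ∣ Npol x - Spol x * Dpol x := by
  have hprod : (∏ i, ((1 + x i + (x i)^2) * x i))
      = (∏ i, (1 + x i + (x i)^2)) * ∏ i, x i := Finset.prod_mul_distrib
  have key : Npol x - Spol x * Dpol x
      = C ((-1)^(n+1) * PP x) * (1 + 2*X) *
          ((∏ i, fpol x i) - C (∏ i, ((1 + x i + (x i)^2) * x i)))
        - C (PP x * ∏ i, x i) * (1 + 2*X) *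
          (Dpol x - C ((-1)^(n+1) * ∏ i, (1 + x i + (x i)^2))) := by
    rw [Npol, Spol, hprod]
    simp only [C_mul, C_pow, map_neg, C_1]
    ring
  rw [key]
  exact dvd_sub (Dvd.dvd.mul_left (qq_dvd_prod_fpol x) _)
    (Dvd.dvd.mul_left (qq_dvd_Dpol x) _)

lemma qq_dvd_Epol : qq K ∣ Epol x := by
  rw [Epol]
  refine dvd_sub (qq_dvd_NS x) ?_
  have h : ∀ (a : K) (p : K[X]), qq K ∣ C a * qq K * p :=
    fun a p => dvd_mul_of_dvd_left (dvd_mul_left _ _) _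
  exact dvd_add (dvd_add (dvd_add (h _ _) (h _ _)) (dvd_sum fun k _ => h _ _))
    (dvd_sum fun k _ => h _ _)

lemma natDegree_Epol_le : (Epol x).natDegree ≤ 2*n + 3 := by
  have hN := natDegree_Npol_le x
  have hSD : (Spol x * Dpol x).natDegree ≤ 2*n + 3 := by
    refine natDegree_mul_le.trans ?_
    have h1 : (Spol x).natDegree ≤ 1 := by unfold Spol; compute_degree
    rw [natDegree_Dpol]
    omega
  have hterm : ∀ (a : K) (p : K[X]), p.natDegree = 2*n+1 →
      (C a * qq K * p).natDegree ≤ 2*n + 3 := by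
    intro a p hp
    have h2 : (C a * qq K).natDegree ≤ 2 :=
      natDegree_mul_le.trans (by simp [natDegree_qq, natDegree_C])
    have h3 := natDegree_mul_le (p := C a * qq K) (q := p)
    omega
  have hsum : ∀ (f : Fin n → K) (g : Fin n → K[X]), (∀ k, (g k).natDegree = 2*n+1) →
      (∑ k, C (f k) * qq K * g k).natDegree ≤ 2*n+3 := by
    intro f g hg
    refine natDegree_sum_le_of_forall_le _ _ (fun k _ => hterm _ _ (hg k))
  have hA : (C (-PP x) * qq K * D0p x).natDegree ≤ 2*n+3 := hterm _ _ (natDegree_D0p x)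
  have hB : (C (-PP x) * qq K * Dm1 x).natDegree ≤ 2*n+3 := hterm _ _ (natDegree_Dm1 x)
  have hC := hsum (term x) (DXp x) (natDegree_DXp x)
  have hD := hsum (term x) (DBp x) (natDegree_DBp x)
  rw [Epol]
  refine (natDegree_sub_le _ _).trans (max_le ((natDegree_sub_le _ _).trans
    (max_le (hN.trans (by omega)) hSD)) ?_)
  refine (natDegree_add_le _ _).trans (max_le ((natDegree_add_le _ _).trans
    (max_le ((natDegree_add_le _ _).trans (max_le hA hB)) hC)) hD)


lemma eval_Epol_zero : (Epol x).eval 0 = 0 := by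
  simp only [Epol, Npol, Spol, Dpol, D0p, Dm1, DXp, DBp, qq, fpol, dpol,
    eval_sub, eval_add, eval_mul, eval_prod, eval_C, eval_X, eval_pow, eval_one,
    eval_ofNat, eval_neg, eval_finset_sum]
  norm_num
  rw [show (∏ i : Fin n, -(x i * (1 + x i))) = ∏ i : Fin n, (-1) * (x i * (1 + x i)) from
      Finset.prod_congr rfl fun i _ => (neg_one_mul _).symm]
  simp only [Finset.prod_mul_distrib, Finset.prod_const, card_univ, Fintype.card_fin]
  ring

lemma eval_Epol_negone : (Epol x).eval (-1) = 0 := by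
  simp only [Epol, Npol, Spol, Dpol, D0p, Dm1, DXp, DBp, qq, fpol, dpol,
    eval_sub, eval_add, eval_mul, eval_prod, eval_C, eval_X, eval_pow, eval_one,
    eval_ofNat, eval_neg, eval_finset_sum]
  norm_num
  rw [show (∏ i : Fin n, (-1 - x i) * x i) = ∏ i : Fin n, (-1) * ((1 + x i) * x i) by
      refine Finset.prod_congr rfl fun i _ => by ring]
  simp only [Finset.prod_mul_distrib, Finset.prod_const, card_univ, Fintype.card_fin]
  ring


lemma PP_split (k : Fin n) :
    PP x = (∏ i ∈ univ.erase k, ∏ j ∈ (Ioi i).erase k, (1 + x i + x j)) *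
      ∏ i ∈ univ.erase k, (1 + x i + x k) := by
  have hsplit : (univ : Finset (Fin n)).erase k = Iio k ∪ Ioi k := by
    ext j
    simp only [mem_erase, mem_univ, and_true, mem_union, mem_Iio, mem_Ioi]
    exact ⟨fun h => h.lt_or_gt, fun h => h.elim (fun h => h.ne) (fun h => h.ne')⟩
  have hdisj : Disjoint (Iio k) (Ioi k) :=
    Finset.disjoint_left.mpr fun a ha hb => absurd (mem_Iio.mp ha) (asymm (mem_Ioi.mp hb))
  calc PP x
      = (∏ i ∈ univ.erase k, ∏ j ∈ Ioi i, (1 + x i + x j)) *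
          ∏ j ∈ Ioi k, (1 + x k + x j) := (Finset.prod_erase_mul _ _ (mem_univ k)).symm
    _ = ((∏ i ∈ Iio k, ∏ j ∈ Ioi i, (1 + x i + x j)) *
          ∏ i ∈ Ioi k, ∏ j ∈ Ioi i, (1 + x i + x j)) *
          ∏ j ∈ Ioi k, (1 + x k + x j) := by rw [hsplit, prod_union hdisj]
    _ = ((∏ i ∈ Iio k, ((∏ j ∈ (Ioi i).erase k, (1 + x i + x j)) * (1 + x i + x k))) *
          ∏ i ∈ Ioi k, ∏ j ∈ (Ioi i).erase k, (1 + x i + x j)) *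
          ∏ j ∈ Ioi k, (1 + x j + x k) := by
        congr 1
        · congr 1
          · exact Finset.prod_congr rfl fun i hi =>
              (Finset.prod_erase_mul _ _ (mem_Ioi.mpr (mem_Iio.mp hi))).symm
          · refine Finset.prod_congr rfl fun i hi => ?_
            rw [Finset.erase_eq_of_notMem
              (fun h => absurd (mem_Ioi.mp h) (asymm (mem_Ioi.mp hi)))]
        · exact Finset.prod_congr rfl fun j _ => by ring
    _ = ((∏ i ∈ Iio k, ∏ j ∈ (Ioi i).erase k, (1 + x i + x j)) *
           ∏ i ∈ Ioi k, ∏ j ∈ (Ioi i).erase k, (1 + x i + x j)) *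
         ((∏ i ∈ Iio k, (1 + x i + x k)) * ∏ i ∈ Ioi k, (1 + x i + x k)) := by
        rw [Finset.prod_mul_distrib]; ring
    _ = (∏ i ∈ univ.erase k, ∏ j ∈ (Ioi i).erase k, (1 + x i + x j)) *
          ∏ i ∈ univ.erase k, (1 + x i + x k) := by
        rw [hsplit, prod_union hdisj, prod_union hdisj]


lemma eval_key_X (hne : ∀ i j : Fin n, i ≠ j → x i ≠ x j) (k : Fin n) :
    (Npol x).eval (x k) = term x k * (qq K).eval (x k) * (DXp x k).eval (x k) := by
  obtain ⟨m, rfl⟩ : ∃ m, n = m + 1 := ⟨n - 1, by have := k.pos; omega⟩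
  have hc : (univ.erase k).card = m := by
    rw [card_erase_of_mem (mem_univ k)]
    simp [card_univ]
  simp only [Npol, qq, DXp, fpol, dpol, term, eval_mul, eval_add, eval_sub, eval_one,
    eval_prod, eval_C, eval_X, eval_pow, eval_ofNat]
  rw [← Finset.mul_prod_erase univ
    (fun i => (1 + x i + x i * x k) * (1 - x i * x k) * x i) (mem_univ k), PP_split x k]
  have hkey : (∏ i ∈ univ.erase k,
        (1 + x i + x i * x k) * (1 - x i * x k) * x i * (x i - x k)⁻¹) *
      (∏ i ∈ univ.erase k, (x k - x i) * (x k + (1 + x i)))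
      = (-1)^m * ((∏ i ∈ univ.erase k, (1 + x i + x i * x k) * (1 - x i * x k) * x i) *
         ∏ i ∈ univ.erase k, (1 + x i + x k)) := by
    rw [show ((-1:K))^m = ∏ _i ∈ univ.erase k, (-1:K) by rw [Finset.prod_const, hc],
      ← Finset.prod_mul_distrib, ← Finset.prod_mul_distrib, ← Finset.prod_mul_distrib]
    refine Finset.prod_congr rfl fun i hi => ?_
    have hik : x i - x k ≠ 0 := sub_ne_zero.mpr (hne i k (mem_erase.mp hi).1)
    field_simp
    ring
  linear_combination (-((1 - x k) *
      (∏ i ∈ univ.erase k, ∏ j ∈ (Ioi i).erase k, (1 + x i + x j)) *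
      (x k ^ 2 + x k + 1) * (x k * (x k + 1) * (x k + (1 + x k))))) * hkey


lemma eval_key_B (hne : ∀ i j : Fin n, i ≠ j → x i ≠ x j) (k : Fin n) :
    (Npol x).eval (-(1 + x k)) = term x k * (qq K).eval (-(1 + x k)) * (DBp x k).eval (-(1 + x k)) := by
  simp only [Npol, qq, DBp, fpol, dpol, term, eval_mul, eval_add, eval_sub, eval_one,
    eval_prod, eval_C, eval_X, eval_pow, eval_ofNat, eval_neg]
  obtain ⟨m, rfl⟩ : ∃ m, n = m + 1 := ⟨n - 1, by have := k.pos; omega⟩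
  have hc : (univ.erase k).card = m := by
    rw [card_erase_of_mem (mem_univ k)]
    simp [card_univ]
  rw [← Finset.mul_prod_erase univ
    (fun i => (1 + x i + x i * -(1 + x k)) * (1 - x i * -(1 + x k)) * x i) (mem_univ k),
    PP_split x k,
    show (∏ i ∈ univ.erase k, (1 + x i + x i * -(1 + x k)) * (1 - x i * -(1 + x k)) * x i)
      = ∏ i ∈ univ.erase k, (1 + x i + x i * x k) * (1 - x i * x k) * x i from
      Finset.prod_congr rfl fun i _ => by ring]
  have hkey : (∏ i ∈ univ.erase k,
        (1 + x i + x i * x k) * (1 - x i * x k) * x i * (x i - x k)⁻¹) *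
      (∏ i ∈ univ.erase k, (-(1 + x k) - x i) * (-(1 + x k) + (1 + x i)))
      = (-1)^m * ((∏ i ∈ univ.erase k, (1 + x i + x i * x k) * (1 - x i * x k) * x i) *
         ∏ i ∈ univ.erase k, (1 + x i + x k)) := by
    rw [show ((-1:K))^m = ∏ _i ∈ univ.erase k, (-1:K) by rw [Finset.prod_const, hc],
      ← Finset.prod_mul_distrib, ← Finset.prod_mul_distrib, ← Finset.prod_mul_distrib]
    refine Finset.prod_congr rfl fun i hi => ?_
    have hik : x i - x k ≠ 0 := sub_ne_zero.mpr (hne i k (mem_erase.mp hi).1)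
    field_simp
    ring
  linear_combination (-((1 - x k) *
      (∏ i ∈ univ.erase k, ∏ j ∈ (Ioi i).erase k, (1 + x i + x j)) *
      (1 + x k + x k^2) * (x k * (1 + x k)) * (-(1 + 2 * x k)))) * hkey


lemma eval_Epol_X (hne : ∀ i j : Fin n, i ≠ j → x i ≠ x j) (k : Fin n) :
    (Epol x).eval (x k) = 0 := by
  have hdk : (dpol x k).eval (x k) = 0 := by simp [dpol]
  have hprod : ∀ s : Finset (Fin n), k ∈ s → (∏ i ∈ s, dpol x i).eval (x k) = 0 :=
    fun s hk => by rw [eval_prod]; exact Finset.prod_eq_zero hk hdk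
  have hker : ∀ j : Fin n, j ≠ k → k ∈ univ.erase j :=
    fun j hj => mem_erase.mpr ⟨hj.symm, mem_univ k⟩
  have eD : (Dpol x).eval (x k) = 0 := by
    simp only [Dpol, eval_mul]; rw [hprod univ (mem_univ k)]; ring
  have e2 : (D0p x).eval (x k) = 0 := by
    simp only [D0p, eval_mul]; rw [hprod univ (mem_univ k)]; ring
  have e3 : (Dm1 x).eval (x k) = 0 := by
    simp only [Dm1, eval_mul]; rw [hprod univ (mem_univ k)]; ring
  have e4 : ∀ j, j ≠ k → (DXp x j).eval (x k) = 0 := fun j hj => by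
    simp only [DXp, eval_mul]; rw [hprod _ (hker j hj)]; ring
  have e5 : ∀ j : Fin n, (DBp x j).eval (x k) = 0 := by
    intro j
    by_cases hj : j = k
    · subst hj; simp [DBp]
    · simp only [DBp, eval_mul]; rw [hprod _ (hker j hj)]; ring
  have hsB : (∑ j, C (term x j) * qq K * DBp x j).eval (x k) = 0 := by
    rw [eval_finset_sum]
    refine Finset.sum_eq_zero fun j _ => ?_
    simp only [eval_mul]; rw [e5 j]; ring
  have hsX : (∑ j, C (term x j) * qq K * DXp x j).eval (x k)
      = term x k * (qq K).eval (x k) * (DXp x k).eval (x k) := by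
    rw [eval_finset_sum]
    rw [Finset.sum_eq_single k (fun j _ hj => by simp only [eval_mul]; rw [e4 j hj]; ring)
      (fun h => absurd (mem_univ k) h)]
    simp [eval_mul, eval_C]
  simp only [Epol, eval_sub, eval_add, eval_mul]
  rw [eD, e2, e3, hsX, hsB, eval_key_X x hne k]
  ring

lemma eval_Epol_B (hne : ∀ i j : Fin n, i ≠ j → x i ≠ x j) (k : Fin n) :
    (Epol x).eval (-(1 + x k)) = 0 := by
  have hdk : (dpol x k).eval (-(1 + x k)) = 0 := by
    simp only [dpol, eval_mul, eval_sub, eval_add, eval_X, eval_C]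
    ring
  have hprod : ∀ s : Finset (Fin n), k ∈ s → (∏ i ∈ s, dpol x i).eval (-(1 + x k)) = 0 :=
    fun s hk => by rw [eval_prod]; exact Finset.prod_eq_zero hk hdk
  have hker : ∀ j : Fin n, j ≠ k → k ∈ univ.erase j :=
    fun j hj => mem_erase.mpr ⟨hj.symm, mem_univ k⟩
  have eD : (Dpol x).eval (-(1 + x k)) = 0 := by
    simp only [Dpol, eval_mul]; rw [hprod univ (mem_univ k)]; ring
  have e2 : (D0p x).eval (-(1 + x k)) = 0 := by
    simp only [D0p, eval_mul]; rw [hprod univ (mem_univ k)]; ring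
  have e3 : (Dm1 x).eval (-(1 + x k)) = 0 := by
    simp only [Dm1, eval_mul]; rw [hprod univ (mem_univ k)]; ring
  have e4 : ∀ j : Fin n, (DXp x j).eval (-(1 + x k)) = 0 := by
    intro j
    by_cases hj : j = k
    · subst hj
      simp only [DXp, eval_mul, eval_add, eval_X, eval_C]
      ring
    · simp only [DXp, eval_mul]; rw [hprod _ (hker j hj)]; ring
  have e5 : ∀ j, j ≠ k → (DBp x j).eval (-(1 + x k)) = 0 := fun j hj => by
    simp only [DBp, eval_mul]; rw [hprod _ (hker j hj)]; ring
  have hsX : (∑ j, C (term x j) * qq K * DXp x j).eval (-(1 + x k)) = 0 := by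
    rw [eval_finset_sum]
    refine Finset.sum_eq_zero fun j _ => ?_
    simp only [eval_mul]; rw [e4 j]; ring
  have hsB : (∑ j, C (term x j) * qq K * DBp x j).eval (-(1 + x k))
      = term x k * (qq K).eval (-(1 + x k)) * (DBp x k).eval (-(1 + x k)) := by
    rw [eval_finset_sum]
    rw [Finset.sum_eq_single k (fun j _ hj => by simp only [eval_mul]; rw [e5 j hj]; ring)
      (fun h => absurd (mem_univ k) h)]
    simp [eval_mul, eval_C]
  simp only [Epol, eval_sub, eval_add, eval_mul]
  rw [eD, e2, e3, hsX, hsB, eval_key_B x hne k]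
  ring


lemma Epol_eq_zero (hne : ∀ i j : Fin n, i ≠ j → x i ≠ x j)
    (h0 : ∀ i, x i ≠ 0) (h1 : ∀ i, 1 + x i ≠ 0)
    (h2 : ∀ i j, 1 + x i + x j ≠ 0) (hq : ∀ i, 1 + x i + (x i)^2 ≠ 0) :
    Epol x = 0 := by
  obtain ⟨E', hE'⟩ := qq_dvd_Epol x
  by_cases hE0 : E' = 0
  · rw [hE', hE0, mul_zero]
  have hdeg : E'.natDegree ≤ 2*n + 1 := by
    have h := natDegree_Epol_le x
    rw [hE', natDegree_mul (monic_qq (K := K)).ne_zero hE0, natDegree_qq] at h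
    omega
  have hqx : ∀ i, (qq K).eval (x i) ≠ 0 := by
    intro i
    have h : (qq K).eval (x i) = 1 + x i + (x i)^2 := by
      simp only [qq, eval_add, eval_pow, eval_X, eval_one]; ring
    rw [h]; exact hq i
  have hqb : ∀ i, (qq K).eval (-(1 + x i)) ≠ 0 := by
    intro i
    have h : (qq K).eval (-(1 + x i)) = 1 + x i + (x i)^2 := by
      simp only [qq, eval_add, eval_pow, eval_X, eval_one]; ring
    rw [h]; exact hq i
  have hq0 : (qq K).eval 0 ≠ 0 := by simp [qq]
  have hqm1 : (qq K).eval (-1) ≠ 0 := by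
    simp only [qq, eval_add, eval_pow, eval_X, eval_one]
    norm_num
  have hval : ∀ a : K, (qq K).eval a ≠ 0 → (Epol x).eval a = 0 → E'.eval a = 0 := by
    intro a ha h
    rw [hE', eval_mul] at h
    exact (mul_eq_zero.mp h).resolve_left ha
  set v : (Fin n ⊕ Fin n ⊕ Bool) → K :=
    Sum.elim x (Sum.elim (fun i => -(1 + x i)) (fun b => if b then -1 else 0)) with hv
  have hinj : Function.Injective v := by
    rintro (i|i|b) (j|j|c) h <;>
      simp only [hv, Sum.elim_inl, Sum.elim_inr] at h
    · exact congrArg Sum.inl (by by_contra h'; exact hne i j h' h)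
    · exact absurd (by linear_combination h : (1:K) + x j + x i = 0) (h2 j i)
    · cases c
      · simp only [Bool.false_eq_true, if_false] at h
        exact absurd h (h0 i)
      · simp only [if_true] at h
        exact absurd (by linear_combination h : (1:K) + x i = 0) (h1 i)
    · exact absurd (by linear_combination -h : (1:K) + x i + x j = 0) (h2 i j)
    · refine congrArg (fun t => Sum.inr (Sum.inl t)) ?_
      by_contra h'
      exact hne i j h' (by linear_combination -h)
    · cases c
      · simp only [Bool.false_eq_true, if_false] at h
        exact absurd (by linear_combination -h : (1:K) + x i = 0) (h1 i)
      · simp only [if_true] at h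
        exact absurd (by linear_combination -h : x i = 0) (h0 i)
    · cases b
      · simp only [Bool.false_eq_true, if_false] at h
        exact absurd h.symm (h0 j)
      · simp only [if_true] at h
        exact absurd (by linear_combination -h : (1:K) + x j = 0) (h1 j)
    · cases b
      · simp only [Bool.false_eq_true, if_false] at h
        exact absurd (by linear_combination h : (1:K) + x j = 0) (h1 j)
      · simp only [if_true] at h
        exact absurd (by linear_combination h : x j = 0) (h0 j)
    · refine congrArg (fun t => Sum.inr (Sum.inr t)) ?_
      cases b <;> cases c
      · rfl
      · simp only [Bool.false_eq_true, if_false, if_true] at h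
        exact absurd (by linear_combination h : (1:K) = 0) one_ne_zero
      · simp only [Bool.false_eq_true, if_false, if_true] at h
        exact absurd (by linear_combination -h : (1:K) = 0) one_ne_zero
      · rfl
  have hzero : E' = 0 := by
    refine Polynomial.eq_zero_of_natDegree_lt_card_of_eval_eq_zero E' hinj ?_ ?_
    · rintro (i|i|b)
      · exact hval _ (hqx i) (eval_Epol_X x hne i)
      · exact hval _ (hqb i) (eval_Epol_B x hne i)
      · cases b
        · exact hval _ hq0 (eval_Epol_zero x)
        · exact hval _ hqm1 (eval_Epol_negone x)
    · simp only [Fintype.card_sum, Fintype.card_fin, Fintype.card_bool]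
      omega
  exact absurd hzero hE0


theorem main_identity (hne : ∀ i j : Fin n, i ≠ j → x i ≠ x j)
    (h0 : ∀ i, x i ≠ 0) (h1 : ∀ i, 1 + x i ≠ 0)
    (h2 : ∀ i j, 1 + x i + x j ≠ 0) (hq : ∀ i, 1 + x i + (x i)^2 ≠ 0)
    (h2K : (2:K) ≠ 0) :
    PP x * (1 - ∏ i, x i) = ∑ k, term x k := by
  have hE := Epol_eq_zero x hne h0 h1 h2 hq
  have hco := congrArg (fun p => Polynomial.coeff p (2*n+3)) hE
  simp only [Epol, coeff_zero, coeff_sub, coeff_add] at hco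
  have hN : (Npol x).coeff (2*n+3) = 0 :=
    coeff_eq_zero_of_natDegree_lt (lt_of_le_of_lt (natDegree_Npol_le x) (by omega))
  have hT : ∀ (r : K) (p : K[X]), p.Monic → p.natDegree = 2*n+1 →
      (C r * qq K * p).coeff (2*n+3) = r := by
    intro r p hm hd
    rw [mul_assoc, coeff_C_mul]
    have hmm : (qq K * p).Monic := (monic_qq).mul hm
    have hh : (qq K * p).natDegree = 2*n+3 := by
      rw [(monic_qq).natDegree_mul hm, natDegree_qq, hd]
      omega
    rw [show 2*n+3 = (qq K * p).natDegree from hh.symm, hmm.coeff_natDegree, mul_one]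
  have hSD : (Spol x * Dpol x).coeff (2*n+3) = 2 * (PP x * ∏ i, x i) := by
    have hsplit : Spol x * Dpol x
        = C (PP x * ∏ i, x i) * Dpol x + C (2 * (PP x * ∏ i, x i)) * (X * Dpol x) := by
      rw [Spol, show (C (2 * (PP x * ∏ i, x i)) : K[X]) = 2 * C (PP x * ∏ i, x i) from by
        rw [C_mul, map_ofNat]]
      ring
    rw [hsplit, coeff_add, coeff_C_mul, coeff_C_mul]
    have hD1 : (Dpol x).coeff (2*n+3) = 0 :=
      coeff_eq_zero_of_natDegree_lt (by rw [natDegree_Dpol]; omega)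
    have hXD : (X * Dpol x).coeff (2*n+3) = 1 := by
      have hm : (X * Dpol x).Monic := monic_X.mul (monic_Dpol x)
      have hh : (X * Dpol x).natDegree = 2*n+3 := by
        rw [monic_X.natDegree_mul (monic_Dpol x), natDegree_X, natDegree_Dpol]
        omega
      rw [show 2*n+3 = (X * Dpol x).natDegree from hh.symm, hm.coeff_natDegree]
    rw [hD1, hXD]
    ring
  have hT0 : (C (-PP x) * qq K * D0p x).coeff (2*n+3) = -PP x :=
    hT _ _ (monic_D0p x) (natDegree_D0p x)
  have hTm1 : (C (-PP x) * qq K * Dm1 x).coeff (2*n+3) = -PP x :=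
    hT _ _ (monic_Dm1 x) (natDegree_Dm1 x)
  have hsX : (∑ k, C (term x k) * qq K * DXp x k).coeff (2*n+3) = ∑ k, term x k := by
    rw [finset_sum_coeff]
    exact Finset.sum_congr rfl fun k _ => hT _ _ (monic_DXp x k) (natDegree_DXp x k)
  have hsB : (∑ k, C (term x k) * qq K * DBp x k).coeff (2*n+3) = ∑ k, term x k := by
    rw [finset_sum_coeff]
    exact Finset.sum_congr rfl fun k _ => hT _ _ (monic_DBp x k) (natDegree_DBp x k)
  rw [hN, hSD, hT0, hTm1, hsX, hsB] at hco
  refine mul_left_cancel₀ h2K ?_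
  linear_combination hco

end Aux

/-- `∏_{1≤i<j≤n}(1+X_i+X_j) · (1 - ∏_{i=1}^n X_i)
= Σ_{k=1}^n (1-X_k) · ∏_{i≠k} (1+X_i+X_i X_k)(1-X_i X_k) X_i / (X_i-X_k)
  · ∏_{i<j, i,j≠k}(1+X_i+X_j)`
in the field of rational functions in `X_1, …, X_n` over `ℚ`. -/
theorem stmt1 (n : ℕ)
    (Y : Fin n → FractionRing (MvPolynomial (Fin n) ℚ))
    (hY : ∀ i, Y i = algebraMap (MvPolynomial (Fin n) ℚ)
      (FractionRing (MvPolynomial (Fin n) ℚ)) (MvPolynomial.X i)) :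
    (∏ i : Fin n, ∏ j ∈ Finset.Ioi i, (1 + Y i + Y j)) * (1 - ∏ i : Fin n, Y i)
    = ∑ k : Fin n, (1 - Y k) *
        (∏ i ∈ Finset.univ.erase k,
          (1 + Y i + Y i * Y k) * (1 - Y i * Y k) * Y i * (Y i - Y k)⁻¹) *
        ∏ i ∈ Finset.univ.erase k, ∏ j ∈ (Finset.Ioi i).erase k, (1 + Y i + Y j) := by
  have inj : Function.Injective (algebraMap (MvPolynomial (Fin n) ℚ) (FractionRing (MvPolynomial (Fin n) ℚ))) := IsFractionRing.injective (MvPolynomial (Fin n) ℚ) (FractionRing (MvPolynomial (Fin n) ℚ))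
  have key : ∀ (p : MvPolynomial (Fin n) ℚ) (w : Fin n → ℚ), MvPolynomial.eval w p ≠ 0 →
      algebraMap (MvPolynomial (Fin n) ℚ) (FractionRing (MvPolynomial (Fin n) ℚ)) p ≠ 0 := by
    intro p w h hc
    apply h
    have hp : p = 0 := by
      apply inj
      rw [hc, map_zero]
    rw [hp, map_zero]
  have hne : ∀ i j : Fin n, i ≠ j → Y i ≠ Y j := by
    intro i j hij
    rw [hY i, hY j]
    intro h
    refine key (MvPolynomial.X i - MvPolynomial.X j)
        (fun t => if t = i then 1 else 0) ?_ ?_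
    · simp [MvPolynomial.eval_X, Ne.symm hij]
    · rw [map_sub, h, sub_self]
  have h0 : ∀ i, Y i ≠ 0 := by
    intro i
    rw [hY i]
    exact key (MvPolynomial.X i) (fun _ => 1) (by simp)
  have h1 : ∀ i, 1 + Y i ≠ 0 := by
    intro i
    rw [hY i, ← map_one (algebraMap (MvPolynomial (Fin n) ℚ) (FractionRing (MvPolynomial (Fin n) ℚ))), ← map_add]
    exact key _ (fun _ => 0) (by simp)
  have h2 : ∀ i j, 1 + Y i + Y j ≠ 0 := by
    intro i j
    rw [hY i, hY j, ← map_one (algebraMap (MvPolynomial (Fin n) ℚ) (FractionRing (MvPolynomial (Fin n) ℚ))), ← map_add, ← map_add]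
    exact key _ (fun _ => 0) (by simp)
  have hq : ∀ i, 1 + Y i + (Y i)^2 ≠ 0 := by
    intro i
    rw [hY i, ← map_one (algebraMap (MvPolynomial (Fin n) ℚ) (FractionRing (MvPolynomial (Fin n) ℚ))), ← map_pow, ← map_add, ← map_add]
    exact key _ (fun _ => 0) (by simp)
  have h2K : (2 : FractionRing (MvPolynomial (Fin n) ℚ)) ≠ 0 := by
    rw [show (2:FractionRing (MvPolynomial (Fin n) ℚ)) = algebraMap (MvPolynomial (Fin n) ℚ) (FractionRing (MvPolynomial (Fin n) ℚ)) 2 from by rw [map_ofNat]]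
    exact key 2 (fun _ => 0) (by simp [map_ofNat])
  have := main_identity Y hne h0 h1 h2 hq h2K
  simpa only [PP, term] using this
end

section
/- For all variables X_1,...,X_n, the antisymmetrization over X_1,...,X_n of ∏_{i=1}^n X_i^{i-1} (1-∏_{j=i}^n X_j)^{-1} equals ∏_{i=1}^n (1-X_i)^{-1} · ∏_{1≤i<j≤n} (X_j-X_i)/(1-X_i X_j). -/
open Finset

section AuxSST
open Finset Polynomial
variable {F : Type*} [Field F]



lemma residue_sum {ι : Type*} [DecidableEq ι] (s : Finset ι) (v : ι → F)
    (hvs : Set.InjOn v s) (g : F[X]) (hg : g.degree < s.card) :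
    ∑ i ∈ s, g.eval (v i) * Lagrange.nodalWeight s v i = g.coeff (s.card - 1) := by
  conv_rhs => rw [Lagrange.eq_interpolate hvs hg]
  rw [Lagrange.interpolate_apply, Polynomial.finset_sum_coeff]
  refine Finset.sum_congr rfl fun i hi => ?_
  rw [Lagrange.basis_eq_prod_sub_inv_mul_nodal_div hi, ← Lagrange.nodal_erase_eq_nodal_div hi,
    ← mul_assoc, ← Polynomial.C_mul, Polynomial.coeff_C_mul]
  have hm : (Lagrange.nodal (s.erase i) v).Monic := Lagrange.nodal_monic
  have hd : (Lagrange.nodal (s.erase i) v).natDegree = s.card - 1 := by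
    rw [Lagrange.natDegree_nodal, Finset.card_erase_of_mem hi]
  rw [← hd, hm.coeff_natDegree, mul_one, mul_comm]

lemma keyA {n : ℕ} (x : Fin (n+1) → F) (hinj : Function.Injective x)
    (h0 : ∀ a, x a ≠ 0) (h1 : ∀ a, x a ≠ -1) :
    ∑ p, (1 - x p) * (x p)⁻¹ * ∏ a ∈ univ.erase p, ((1 - x p * x a) * (x p - x a)⁻¹)
      = (-1)^n * ((∏ a, x a)⁻¹ - 1) := by
  classical
  set im : Finset F := Finset.image x univ with him
  have hxim : ∀ p : Fin (n+1), x p ∈ im := fun p => Finset.mem_image_of_mem x (mem_univ p)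
  have h0im : (0:F) ∉ im := by
    simp only [him, Finset.mem_image]; rintro ⟨a, -, ha⟩; exact h0 a ha
  have h1im : (-1:F) ∉ im := by
    simp only [him, Finset.mem_image]; rintro ⟨a, -, ha⟩; exact h1 a ha
  have h01 : (0:F) ≠ -1 := by
    intro h; exact one_ne_zero (α := F) (neg_eq_zero.mp h.symm)
  set s : Finset F := insert (0:F) (insert (-1:F) im) with hs
  have h0m : (0:F) ∉ insert (-1:F) im := by simp [h01, h0im]
  have hcard : s.card = n + 3 := by
    rw [hs, Finset.card_insert_of_notMem h0m, Finset.card_insert_of_notMem h1im,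
      him, Finset.card_image_of_injective _ hinj]
    simp
  set g : F[X] := ∏ a : Fin (n+1), (1 - Polynomial.C (x a) * X) with hg
  have hfac : ∀ a : Fin (n+1), (1 - Polynomial.C (x a) * X).natDegree ≤ 1 := by
    intro a
    refine le_trans (Polynomial.natDegree_sub_le _ _) ?_
    simpa using Polynomial.natDegree_C_mul_le (x a) X
  have hgnd : g.natDegree ≤ n + 1 := by
    refine le_trans (Polynomial.natDegree_prod_le _ _) ?_
    have h2 := Finset.sum_le_sum (s := (univ : Finset (Fin (n+1))))
      (f := fun a => (1 - Polynomial.C (x a) * X).natDegree) (g := fun _ => 1)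
      (fun a _ => hfac a)
    simpa using h2
  have hdeg : g.degree < s.card := by
    rw [hcard]
    calc g.degree ≤ (g.natDegree : WithBot ℕ) := Polynomial.degree_le_natDegree
      _ < ((n+3 : ℕ) : WithBot ℕ) := by exact_mod_cast lt_of_le_of_lt hgnd (by omega)
  have key := residue_sum s id (Set.injOn_id _) g hdeg
  rw [hcard] at key
  have hco : g.coeff (n + 3 - 1) = 0 :=
    Polynomial.coeff_eq_zero_of_natDegree_lt (by omega)
  rw [hco] at key
  rw [hs, Finset.sum_insert h0m, Finset.sum_insert h1im, him,
    Finset.sum_image (fun a _ b _ h => hinj h)] at key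
  -- the three node weights
  have h1p : ∀ p, x p + 1 ≠ 0 := fun p h => h1 p (eq_neg_of_add_eq_zero_left h)
  have himage : ∀ p : Fin (n+1), im.erase (x p) = Finset.image x (univ.erase p) := by
    intro p; rw [him, ← Finset.image_erase hinj]
  have e0 : s.erase (0:F) = insert (-1:F) im := by rw [hs, Finset.erase_insert h0m]
  have e1 : s.erase (-1:F) = insert (0:F) im := by
    rw [hs, Finset.erase_insert_of_ne h01, Finset.erase_insert h1im]
  have ep : ∀ p : Fin (n+1), s.erase (x p)
      = insert (0:F) (insert (-1:F) (Finset.image x (univ.erase p))) := by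
    intro p
    rw [hs, Finset.erase_insert_of_ne (Ne.symm (h0 p)),
      Finset.erase_insert_of_ne (Ne.symm (h1 p)), himage p]
  have him0 : (0:F) ∉ Finset.image x univ := h0im
  -- term at 0
  have T0 : g.eval (id (0:F)) * Lagrange.nodalWeight s id 0
      = (-1)^(n+1) * (∏ a, x a)⁻¹ := by
    have hev : g.eval 0 = 1 := by rw [hg, Polynomial.eval_prod]; simp
    rw [id, hev, one_mul, Lagrange.nodalWeight, e0, Finset.prod_insert h1im, him,
      Finset.prod_image (fun a _ b _ h => hinj h)]
    have : ∀ a : Fin (n+1), (id (0:F) - id (x a))⁻¹ = (-1) * (x a)⁻¹ := by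
      intro a; simp [inv_neg]
    rw [Finset.prod_congr rfl (fun a _ => this a), Finset.prod_mul_distrib,
      Finset.prod_const, ← Finset.prod_inv_distrib]
    simp
  -- term at -1
  have T1 : g.eval (id (-1:F)) * Lagrange.nodalWeight s id (-1)
      = (-1)^n := by
    have hev : g.eval (-1) = ∏ a, (x a + 1) := by
      rw [hg, Polynomial.eval_prod]; refine Finset.prod_congr rfl fun a _ => ?_; simp; ring
    rw [id, hev, Lagrange.nodalWeight, e1, Finset.prod_insert h0im, him,
      Finset.prod_image (fun a _ b _ h => hinj h)]
    have : ∀ a : Fin (n+1), (id (-1:F) - id (x a))⁻¹ = (-1) * (x a + 1)⁻¹ := by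
      intro a
      have : id (-1:F) - id (x a) = -(x a + 1) := by simp [id]; ring
      rw [this, inv_neg]; ring
    rw [Finset.prod_congr rfl (fun a _ => this a), Finset.prod_mul_distrib,
      Finset.prod_const, Finset.prod_inv_distrib]
    have hne : (∏ a, (x a + 1)) ≠ 0 := Finset.prod_ne_zero_iff.2 fun a _ => h1p a
    have h2 : id (-1:F) - id (0:F) = -1 := by simp
    rw [h2, Finset.card_univ, Fintype.card_fin]
    field_simp
    ring
  -- terms at x p
  have TP : ∀ p : Fin (n+1), g.eval (id (x p)) * Lagrange.nodalWeight s id (x p)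
      = (1 - x p) * (x p)⁻¹ * ∏ a ∈ univ.erase p, ((1 - x p * x a) * (x p - x a)⁻¹) := by
    intro p
    have hev : g.eval (x p) = (1 - x p * x p) * ∏ a ∈ univ.erase p, (1 - x p * x a) := by
      rw [hg, Polynomial.eval_prod]
      calc ∏ j, Polynomial.eval (x p) (1 - Polynomial.C (x j) * X)
          = ∏ j, (1 - x p * x j) := Finset.prod_congr rfl (fun j _ => by simp; ring)
        _ = (1 - x p * x p) * ∏ a ∈ univ.erase p, (1 - x p * x a) :=
            (Finset.mul_prod_erase univ _ (Finset.mem_univ p)).symm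
    have hW : Lagrange.nodalWeight s id (x p)
        = (x p)⁻¹ * ((x p + 1)⁻¹ * ∏ a ∈ univ.erase p, (x p - x a)⁻¹) := by
      have h0' : (0:F) ∉ insert (-1:F) (Finset.image x (univ.erase p)) := by
        simp only [Finset.mem_insert]
        push_neg
        refine ⟨h01, fun hmem => h0im ?_⟩
        exact Finset.image_subset_image (Finset.erase_subset _ _) hmem
      have h1' : (-1:F) ∉ Finset.image x (univ.erase p) := fun hmem =>
        h1im (Finset.image_subset_image (Finset.erase_subset _ _) hmem)
      rw [Lagrange.nodalWeight, ep p, Finset.prod_insert h0', Finset.prod_insert h1',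
        Finset.prod_image (fun a _ b _ h => hinj h)]
      simp [sub_neg_eq_add]
    rw [id, hev, hW]
    have hfac : (1 - x p * x p) * (x p + 1)⁻¹ = 1 - x p := by
      have : (1 - x p * x p) = (1 - x p) * (x p + 1) := by ring
      rw [this, mul_assoc, mul_inv_cancel₀ (h1p p), mul_one]
    rw [Finset.prod_mul_distrib]
    calc (1 - x p * x p) * (∏ a ∈ univ.erase p, (1 - x p * x a)) *
          ((x p)⁻¹ * ((x p + 1)⁻¹ * ∏ a ∈ univ.erase p, (x p - x a)⁻¹))
        = ((1 - x p * x p) * (x p + 1)⁻¹) * (x p)⁻¹ *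
          ((∏ a ∈ univ.erase p, (1 - x p * x a)) * ∏ a ∈ univ.erase p, (x p - x a)⁻¹) := by
          ring
      _ = _ := by rw [hfac]
  rw [T0, T1, Finset.sum_congr rfl (fun p _ => TP p)] at key
  have hpow : ((-1:F))^(n+1) = -(-1)^n := by rw [pow_succ]; ring
  rw [hpow] at key
  linear_combination key



lemma prod_succAbove {n : ℕ} (p : Fin (n+1)) (h : Fin (n+1) → F) :
    ∏ i : Fin n, h (p.succAbove i) = ∏ a ∈ univ.erase p, h a := by
  refine Finset.prod_bij (fun a _ => p.succAbove a) ?_ ?_ ?_ ?_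
  · intro a _
    exact Finset.mem_erase.mpr ⟨Fin.succAbove_ne p a, Finset.mem_univ _⟩
  · intro a _ b _ hab
    exact (Fin.succAbove_right_injective (p := p)) hab
  · intro b hb
    obtain ⟨a, ha⟩ := Fin.exists_succAbove_eq (Finset.mem_erase.mp hb).1
    exact ⟨a, Finset.mem_univ _, ha⟩
  · intro a _; rfl

lemma prod_Ici_succ {n : ℕ} (i : Fin n) (f : Fin (n+1) → F) :
    ∏ j ∈ Ici i.succ, f j = ∏ j ∈ Ici i, f j.succ := by
  refine (Finset.prod_bij (fun (j : Fin n) _ => j.succ) ?_ ?_ ?_ ?_).symm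
  · intro j hj
    exact Finset.mem_Ici.mpr (Fin.succ_le_succ_iff.mpr (Finset.mem_Ici.mp hj))
  · intro a _ b _ hab; exact Fin.succ_injective _ hab
  · intro b hb
    have hb' := Finset.mem_Ici.mp hb
    have : b ≠ 0 := by
      intro h; rw [h] at hb'
      exact absurd hb' (by simp [Fin.le_def])
    obtain ⟨j, hj⟩ := Fin.eq_succ_of_ne_zero this
    exact ⟨j, Finset.mem_Ici.mpr (Fin.succ_le_succ_iff.mp (hj ▸ hb')), hj.symm⟩
  · intro a _; rfl

lemma Ici_zero_fin {n : ℕ} : (Ici (0 : Fin (n+1))) = univ := by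
  ext j; simp [Fin.zero_le]

lemma prod_Ioi_split {n : ℕ} (p : Fin (n+1)) (g : Fin (n+1) → Fin (n+1) → F) :
    ∏ i, ∏ j ∈ Ioi i, g i j
      = (∏ i : Fin n, ∏ j ∈ Ioi i, g (p.succAbove i) (p.succAbove j)) *
        ((∏ j ∈ Ioi p, g p j) * ∏ i ∈ Iio p, g i p) := by
  rw [← Finset.mul_prod_erase univ (fun i => ∏ j ∈ Ioi i, g i j) (Finset.mem_univ p)]
  have inner : ∀ i ∈ univ.erase p,
      ∏ j ∈ Ioi i, g i j = (if i < p then g i p else 1) * ∏ j ∈ (Ioi i).erase p, g i j := by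
    intro i hi
    by_cases h : i < p
    · rw [if_pos h, Finset.mul_prod_erase (Ioi i) _ (Finset.mem_Ioi.mpr h)]
    · rw [if_neg h, one_mul, Finset.erase_eq_of_notMem]
      intro hc; exact h (Finset.mem_Ioi.mp hc)
  rw [Finset.prod_congr rfl inner, Finset.prod_mul_distrib]
  have e1 : ∏ i ∈ univ.erase p, (if i < p then g i p else 1) = ∏ i ∈ Iio p, g i p := by
    rw [← Finset.prod_filter]
    congr 1
    ext a
    simp only [Finset.mem_filter, Finset.mem_erase, Finset.mem_univ, Finset.mem_Iio, true_and,
      and_true]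
    exact ⟨fun h => h.2, fun h => ⟨ne_of_lt h, h⟩⟩
  have e2 : ∏ i ∈ univ.erase p, ∏ j ∈ (Ioi i).erase p, g i j
      = ∏ i : Fin n, ∏ j ∈ Ioi i, g (p.succAbove i) (p.succAbove j) := by
    refine (Finset.prod_bij (fun a _ => p.succAbove a) ?_ ?_ ?_ ?_).symm
    · intro a _
      exact Finset.mem_erase.mpr ⟨Fin.succAbove_ne p a, Finset.mem_univ _⟩
    · intro a _ b _ hab; exact (Fin.succAbove_right_injective (p := p)) hab
    · intro b hb
      obtain ⟨a, ha⟩ := Fin.exists_succAbove_eq (Finset.mem_erase.mp hb).1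
      exact ⟨a, Finset.mem_univ _, ha⟩
    · intro a _
      refine (Finset.prod_bij (fun b _ => p.succAbove b) ?_ ?_ ?_ ?_)
      · intro b hb
        refine Finset.mem_erase.mpr ⟨Fin.succAbove_ne p b, Finset.mem_Ioi.mpr ?_⟩
        exact Fin.succAbove_lt_succAbove_iff.mpr (Finset.mem_Ioi.mp hb)
      · intro a' _ b' _ hab; exact (Fin.succAbove_right_injective (p := p)) hab
      · intro c hc
        have hc' := Finset.mem_erase.mp hc
        obtain ⟨b, hb⟩ := Fin.exists_succAbove_eq hc'.1
        refine ⟨b, Finset.mem_Ioi.mpr ?_, hb⟩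
        have := Finset.mem_Ioi.mp hc'.2
        rw [← hb] at this
        exact Fin.succAbove_lt_succAbove_iff.mp this
      · intro b _; rfl
  rw [e1, e2]
  ring



lemma prod_pairs_perm_symm {n : ℕ} (g : Fin n → Fin n → F) (hg : ∀ i j, g i j = g j i)
    (σ : Equiv.Perm (Fin n)) :
    ∏ i, ∏ j ∈ Ioi i, g (σ i) (σ j) = ∏ i, ∏ j ∈ Ioi i, g i j := by
  rw [Finset.prod_sigma', Finset.prod_sigma']
  refine Finset.prod_nbij'
    (fun q => if σ q.1 < σ q.2 then ⟨σ q.1, σ q.2⟩ else ⟨σ q.2, σ q.1⟩)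
    (fun q => if σ⁻¹ q.1 < σ⁻¹ q.2 then ⟨σ⁻¹ q.1, σ⁻¹ q.2⟩ else ⟨σ⁻¹ q.2, σ⁻¹ q.1⟩)
    ?_ ?_ ?_ ?_ ?_
  · rintro ⟨a, b⟩ hab
    simp only [Finset.mem_sigma, Finset.mem_univ, Finset.mem_Ioi, true_and] at hab ⊢
    split_ifs with h
    · exact h
    · exact lt_of_le_of_ne (not_lt.mp h) (fun hc => hab.ne (σ.injective hc.symm))
  · rintro ⟨a, b⟩ hab
    simp only [Finset.mem_sigma, Finset.mem_univ, Finset.mem_Ioi, true_and] at hab ⊢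
    split_ifs with h
    · exact h
    · exact lt_of_le_of_ne (not_lt.mp h) (fun hc => hab.ne (σ⁻¹.injective hc.symm))
  · rintro ⟨a, b⟩ hab
    simp only [Finset.mem_sigma, Finset.mem_univ, Finset.mem_Ioi, true_and] at hab
    by_cases h : σ a < σ b
    · simp [h, hab]
    · simp [h, hab.asymm]
  · rintro ⟨a, b⟩ hab
    simp only [Finset.mem_sigma, Finset.mem_univ, Finset.mem_Ioi, true_and] at hab
    by_cases h : σ⁻¹ a < σ⁻¹ b
    · rw [Equiv.Perm.inv_def] at h; simp [h, hab]
    · rw [Equiv.Perm.inv_def] at h; simp [h, hab.asymm]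
  · rintro ⟨a, b⟩ hab
    dsimp only
    split_ifs with h
    · rfl
    · exact hg _ _
lemma prod_pairs_perm_sub {n : ℕ} (v : Fin n → F) (σ : Equiv.Perm (Fin n)) :
    ∏ i, ∏ j ∈ Ioi i, (v (σ j) - v (σ i))
      = ((Equiv.Perm.sign σ : ℤ) : F) * ∏ i, ∏ j ∈ Ioi i, (v j - v i) := by
  have h1 := Matrix.det_vandermonde (fun i => v (σ i))
  have h2 := Matrix.det_permute σ (Matrix.vandermonde v)
  have h3 : Matrix.vandermonde (fun i => v (σ i)) = (Matrix.vandermonde v).submatrix σ id := by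
    funext i j; simp [Matrix.vandermonde_apply]
  rw [h3, h2, Matrix.det_vandermonde] at h1
  exact h1.symm


def Lfun (n : ℕ) (x : Fin n → F) : F :=
  ∑ σ : Equiv.Perm (Fin n),
    ((Equiv.Perm.sign σ : ℤ) : F) *
      ∏ i : Fin n, (x (σ i)) ^ (i : ℕ) * (1 - ∏ j ∈ Finset.Ici i, x (σ j))⁻¹

def Rfun (n : ℕ) (x : Fin n → F) : F :=
  (∏ i : Fin n, (1 - x i)⁻¹) *
    ∏ i : Fin n, ∏ j ∈ Finset.Ioi i, (x j - x i) * (1 - x i * x j)⁻¹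

-- Rfun composed with a permutation picks up the sign.
lemma Rfun_comp_perm {n : ℕ} (w : Fin n → F) (c : Equiv.Perm (Fin n)) :
    Rfun n (fun t => w (c t)) = ((Equiv.Perm.sign c : ℤ) : F) * Rfun n w := by
  rw [Rfun, Rfun]
  have h1 : ∏ t, (1 - w (c t))⁻¹ = ∏ t, (1 - w t)⁻¹ :=
    Equiv.prod_comp c (fun a => (1 - w a)⁻¹)
  have split : ∀ v : Fin n → F,
      ∏ i, ∏ j ∈ Ioi i, (v j - v i) * (1 - v i * v j)⁻¹
        = (∏ i, ∏ j ∈ Ioi i, (v j - v i)) * ∏ i, ∏ j ∈ Ioi i, (1 - v i * v j)⁻¹ := by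
    intro v
    calc ∏ i, ∏ j ∈ Ioi i, (v j - v i) * (1 - v i * v j)⁻¹
        = ∏ i, ((∏ j ∈ Ioi i, (v j - v i)) * ∏ j ∈ Ioi i, (1 - v i * v j)⁻¹) :=
          Finset.prod_congr rfl fun i _ => Finset.prod_mul_distrib
      _ = _ := Finset.prod_mul_distrib
  rw [h1, split, split,
    prod_pairs_perm_sub w c,
    prod_pairs_perm_symm (fun a b => (1 - w a * w b)⁻¹) (fun a b => by rw [mul_comm]) c]
  ring

lemma Lfun_zero (x : Fin 0 → F) : Lfun 0 x = 1 := by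
  rw [Lfun]
  rw [Finset.sum_eq_single_of_mem 1 (Finset.mem_univ 1) (fun b _ hb => absurd (Subsingleton.elim b 1) hb)]
  simp

lemma Rfun_zero (x : Fin 0 → F) : Rfun 0 x = 1 := by
  rw [Rfun]; simp

theorem main_id : ∀ (n : ℕ) (x : Fin n → F), Function.Injective x → (∀ i, x i ≠ 0) →
    (∀ i, x i ≠ -1) → (∀ S : Finset (Fin n), S.Nonempty → ∏ i ∈ S, x i ≠ 1) →
    Lfun n x = Rfun n x := by
  intro n
  induction n with
  | zero => intro x _ _ _ _; rw [Lfun_zero, Rfun_zero]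
  | succ n ih =>
    intro x hinj h0 h1 hS
    have hP0 : (∏ i, x i) ≠ 0 := Finset.prod_ne_zero_iff.2 fun i _ => h0 i
    have hP : (1 - ∏ i, x i) ≠ 0 := sub_ne_zero.mpr (Ne.symm (hS univ univ_nonempty))
    have hsub : ∀ a b : Fin (n+1), a ≠ b → x a - x b ≠ 0 := fun a b hab =>
      sub_ne_zero.mpr (fun hc => hab (hinj hc))
    have hone : ∀ a b : Fin (n+1), a ≠ b → (1:F) - x a * x b ≠ 0 := by
      intro a b hab
      apply sub_ne_zero.mpr
      intro hc
      have := hS {a, b} (insert_nonempty a {b})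
      rw [Finset.prod_insert (by simp [hab]), Finset.prod_singleton] at this
      exact this hc.symm
    -- STEP A --
    have hA : Lfun (n+1) x = (1 - ∏ i, x i)⁻¹ *
        ∑ p : Fin (n+1), (if p = 0 then (1:F) else -1) *
          ((∏ t : Fin n, x (Equiv.swap 0 p t.succ)) *
            Lfun n (fun t => x (Equiv.swap 0 p t.succ))) := by
      rw [Lfun, ← Equiv.sum_comp (Equiv.Perm.decomposeFin.symm)
          (fun σ : Equiv.Perm (Fin (n+1)) => ((Equiv.Perm.sign σ : ℤ) : F) *
            ∏ i : Fin (n+1), (x (σ i)) ^ (i : ℕ) * (1 - ∏ j ∈ Finset.Ici i, x (σ j))⁻¹),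
        Fintype.sum_prod_type, Finset.mul_sum]
      refine Finset.sum_congr rfl fun p _ => ?_
      rw [Lfun, Finset.mul_sum, Finset.mul_sum, Finset.mul_sum]
      refine Finset.sum_congr rfl fun e _ => ?_
      set σ := Equiv.Perm.decomposeFin.symm (p, e) with hσ
      have hsgn : ((Equiv.Perm.sign σ : ℤ) : F)
          = (if p = 0 then (1:F) else -1) * ((Equiv.Perm.sign e : ℤ) : F) := by
        rw [hσ, Equiv.Perm.decomposeFin.symm_sign]
        split_ifs <;> push_cast <;> ring
      have h00 : (x (σ 0)) ^ ((0 : Fin (n+1)) : ℕ) *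
          (1 - ∏ j ∈ Finset.Ici (0 : Fin (n+1)), x (σ j))⁻¹ = (1 - ∏ i, x i)⁻¹ := by
        rw [Ici_zero_fin, Equiv.prod_comp σ x]
        simp
      have hsucc : ∀ t : Fin n, (x (σ t.succ)) ^ ((t.succ : Fin (n+1)) : ℕ) *
          (1 - ∏ j ∈ Finset.Ici t.succ, x (σ j))⁻¹
          = x (Equiv.swap 0 p (e t).succ) *
            ((x (Equiv.swap 0 p (e t).succ)) ^ (t : ℕ) *
              (1 - ∏ j ∈ Finset.Ici t, x (Equiv.swap 0 p (e j).succ))⁻¹) := by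
        intro t
        rw [prod_Ici_succ]
        have happ : ∀ j : Fin n, σ j.succ = Equiv.swap 0 p (e j).succ := fun j =>
          Equiv.Perm.decomposeFin_symm_apply_succ e p j
        rw [happ t, Finset.prod_congr rfl (fun j _ => by rw [happ j]), Fin.val_succ, pow_succ']
        ring
      rw [Fin.prod_univ_succ, h00, Finset.prod_congr rfl (fun t _ => hsucc t),
        Finset.prod_mul_distrib, Equiv.prod_comp e (fun t => x (Equiv.swap 0 p t.succ)), hsgn]
      ring
    -- induction hypothesis applies to each restricted family --
    have ihz : ∀ p : Fin (n+1), Lfun n (fun t => x (Equiv.swap 0 p t.succ))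
        = Rfun n (fun t => x (Equiv.swap 0 p t.succ)) := by
      intro p
      have hmapinj : Function.Injective (fun t : Fin n => Equiv.swap 0 p t.succ) := by
        intro a b hab
        exact Fin.succ_injective _ ((Equiv.swap 0 p).injective hab)
      refine ih _ (fun a b hab => hmapinj (hinj hab)) (fun t => h0 _) (fun t => h1 _) ?_
      intro S hSne
      have himg : ∏ t ∈ S, x (Equiv.swap 0 p t.succ)
          = ∏ j ∈ S.image (fun t : Fin n => Equiv.swap 0 p t.succ), x j := by
        rw [Finset.prod_image (fun a _ b _ hab => hmapinj hab)]
      rw [himg]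
      exact hS _ (hSne.image _)
    -- abbreviation for the pair product over Fin (n+1)
    set T : F := ∏ i : Fin (n+1), ∏ j ∈ Finset.Ioi i, (x j - x i) * (1 - x i * x j)⁻¹ with hT
    -- STEP B core : evaluation of Rfun on x ∘ succAbove p --
    have hprodz : ∀ p : Fin (n+1), ∏ t : Fin n, x (p.succAbove t)
        = (∏ i, x i) * (x p)⁻¹ := by
      intro p
      rw [prod_succAbove p x]
      have e := Finset.prod_erase_mul univ x (Finset.mem_univ p)
      rw [← e, mul_assoc, mul_inv_cancel₀ (h0 p), mul_one]
    have hcore : ∀ p : Fin (n+1),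
        Rfun n (fun t => x (p.succAbove t))
          = ((∏ a, (1 - x a)⁻¹) * (1 - x p)) *
            (T * ((-1)^(n - (p:ℕ)) *
                ∏ a ∈ univ.erase p, ((1 - x p * x a) * (x p - x a)⁻¹))) := by
      intro p
      have h1xp : (1:F) - x p ≠ 0 :=
        sub_ne_zero.mpr (fun hc => (hS {p} (singleton_nonempty p)) (by simp [hc.symm]))
      have f1 : ∏ t : Fin n, (1 - x (p.succAbove t))⁻¹
          = (∏ a, (1 - x a)⁻¹) * (1 - x p) := by
        rw [prod_succAbove p (fun a => (1 - x a)⁻¹)]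
        have e := Finset.prod_erase_mul univ (fun a => (1 - x a)⁻¹) (Finset.mem_univ p)
        rw [← e, mul_assoc, inv_mul_cancel₀ h1xp, mul_one]
      have hcardIoi : (Finset.Ioi p).card = n - (p:ℕ) := by
        rw [Fin.card_Ioi]; omega
      set E : F := ∏ a ∈ univ.erase p, ((x p - x a) * (1 - x p * x a)⁻¹) with hE
      have hEne : E ≠ 0 := by
        rw [hE]
        refine Finset.prod_ne_zero_iff.2 fun a ha => mul_ne_zero ?_ (inv_ne_zero ?_)
        · exact hsub p a (Ne.symm (Finset.mem_erase.mp ha).1)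
        · exact hone p a (Ne.symm (Finset.mem_erase.mp ha).1)
      have hsplit := prod_Ioi_split p (fun a b => (x b - x a) * (1 - x a * x b)⁻¹)
      have hBC : (∏ j ∈ Finset.Ioi p, (x j - x p) * (1 - x p * x j)⁻¹) *
          (∏ i ∈ Finset.Iio p, (x p - x i) * (1 - x i * x p)⁻¹)
          = (-1)^(n - (p:ℕ)) * E := by
        have hB : ∏ j ∈ Finset.Ioi p, (x j - x p) * (1 - x p * x j)⁻¹
            = (-1)^(n - (p:ℕ)) * ∏ j ∈ Finset.Ioi p, ((x p - x j) * (1 - x p * x j)⁻¹) := by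
          rw [Finset.prod_congr rfl (fun j (_ : j ∈ Finset.Ioi p) =>
            show (x j - x p) * (1 - x p * x j)⁻¹
              = (-1) * ((x p - x j) * (1 - x p * x j)⁻¹) by ring),
            Finset.prod_mul_distrib, Finset.prod_const, hcardIoi]
        have hC : ∏ i ∈ Finset.Iio p, (x p - x i) * (1 - x i * x p)⁻¹
            = ∏ i ∈ Finset.Iio p, ((x p - x i) * (1 - x p * x i)⁻¹) :=
          Finset.prod_congr rfl fun i _ => by rw [mul_comm (x i) (x p)]
        have hU : E = (∏ i ∈ Finset.Iio p, ((x p - x i) * (1 - x p * x i)⁻¹)) *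
            (∏ j ∈ Finset.Ioi p, ((x p - x j) * (1 - x p * x j)⁻¹)) := by
          rw [hE, show univ.erase p = Finset.Iio p ∪ Finset.Ioi p by
              ext a
              simp only [Finset.mem_erase, Finset.mem_univ, and_true, Finset.mem_union,
                Finset.mem_Iio, Finset.mem_Ioi]
              exact ne_iff_lt_or_gt,
            Finset.prod_union (Finset.disjoint_left.mpr (fun a ha hb =>
              absurd (Finset.mem_Ioi.mp hb) (not_lt.mpr (le_of_lt (Finset.mem_Iio.mp ha)))))]
        rw [hB, hC, hU]
        ring
      have hBCne : ((-1:F))^(n - (p:ℕ)) * E ≠ 0 :=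
        mul_ne_zero (pow_ne_zero _ (by norm_num)) hEne
      have hPn : ∏ t : Fin n, ∏ j ∈ Finset.Ioi t, (x (p.succAbove j) - x (p.succAbove t)) *
            (1 - x (p.succAbove t) * x (p.succAbove j))⁻¹
          = T * ((-1)^(n - (p:ℕ)) * E)⁻¹ := by
        rw [hT, hsplit, hBC, mul_assoc, mul_inv_cancel₀ hBCne, mul_one]
      have hinvprod : ∏ a ∈ univ.erase p, ((1 - x p * x a) * (x p - x a)⁻¹) = E⁻¹ := by
        rw [hE, ← Finset.prod_inv_distrib]
        exact Finset.prod_congr rfl fun a _ => by rw [mul_inv, inv_inv, mul_comm]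
      have hneg : (((-1:F))^(n - (p:ℕ)))⁻¹ = ((-1:F))^(n - (p:ℕ)) := by
        rw [← inv_pow, inv_neg_one]
      rw [Rfun]
      rw [f1, hPn, mul_inv, hneg, ← hinvprod]
    -- STEP B : each summand in closed form --
    have hstep : ∀ p : Fin (n+1),
        (if p = 0 then (1:F) else -1) *
          ((∏ t : Fin n, x (Equiv.swap 0 p t.succ)) *
            Rfun n (fun t => x (Equiv.swap 0 p t.succ)))
        = (((∏ a, (1 - x a)⁻¹) * T) * ((-1)^n * (∏ i, x i))) *
            ((1 - x p) * (x p)⁻¹ *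
              ∏ a ∈ univ.erase p, ((1 - x p * x a) * (x p - x a)⁻¹)) := by
      intro p
      rcases Fin.eq_zero_or_eq_succ p with rfl | ⟨i, rfl⟩
      · have hz : (fun t : Fin n => x (Equiv.swap 0 (0:Fin (n+1)) t.succ))
            = fun t => x ((0:Fin (n+1)).succAbove t) := by
          funext t; rw [Equiv.swap_self]; rfl
        rw [if_pos rfl, hz, one_mul, hcore 0, hprodz 0]
        simp only [Fin.val_zero, Nat.sub_zero]
        ring
      · have hz : (fun t : Fin n => x (Equiv.swap 0 (i.succ : Fin (n+1)) t.succ))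
            = fun t => x ((i.succ : Fin (n+1)).succAbove (i.cycleRange t)) := by
          funext t; rw [← Fin.succAbove_cycleRange i t]
        rw [if_neg (Fin.succ_ne_zero i), hz]
        have hr : Rfun n (fun t => x ((i.succ : Fin (n+1)).succAbove (i.cycleRange t)))
            = ((Equiv.Perm.sign i.cycleRange : ℤ) : F) *
              Rfun n (fun s => x ((i.succ : Fin (n+1)).succAbove s)) :=
          Rfun_comp_perm (fun s => x ((i.succ : Fin (n+1)).succAbove s)) i.cycleRange
        have hq : ∏ t : Fin n, x ((i.succ : Fin (n+1)).succAbove (i.cycleRange t))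
            = ∏ t : Fin n, x ((i.succ : Fin (n+1)).succAbove t) :=
          Equiv.prod_comp i.cycleRange (fun s => x ((i.succ : Fin (n+1)).succAbove s))
        rw [hr, hq, hcore i.succ, hprodz i.succ, Fin.sign_cycleRange]
        push_cast
        have hv : ((i.succ : Fin (n+1)) : ℕ) = (i:ℕ)+1 := Fin.val_succ i
        rw [hv]
        have hexp : (-1:F) * ((-1)^(i:ℕ) * (-1)^(n - ((i:ℕ)+1))) = (-1)^n := by
          rw [← pow_add, ← pow_succ']
          congr 1
          omega
        linear_combination ((∏ a, (1 - x a)⁻¹) * (1 - x i.succ) * T *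
          ((∏ i, x i) * (x i.succ)⁻¹ *
            ∏ a ∈ univ.erase (i.succ : Fin (n+1)),
              ((1 - x i.succ * x a) * (x i.succ - x a)⁻¹))) * hexp
    -- assemble --
    have hLR : ∀ p : Fin (n+1),
        (if p = 0 then (1:F) else -1) *
          ((∏ t : Fin n, x (Equiv.swap 0 p t.succ)) *
            Lfun n (fun t => x (Equiv.swap 0 p t.succ)))
        = (((∏ a, (1 - x a)⁻¹) * T) * ((-1)^n * (∏ i, x i))) *
            ((1 - x p) * (x p)⁻¹ *
              ∏ a ∈ univ.erase p, ((1 - x p * x a) * (x p - x a)⁻¹)) := by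
      intro p
      rw [ihz p]
      exact hstep p
    rw [hA, Finset.sum_congr rfl (fun p _ => hLR p),
      ← Finset.mul_sum, keyA x hinj h0 h1]
    have h2 : ((-1:F)^n) * (-1)^n = 1 := by
      rw [← pow_add]; exact Even.neg_one_pow ⟨n, rfl⟩
    have h3 : (∏ i, x i) * ((∏ i, x i)⁻¹ - 1) = 1 - ∏ i, x i := by
      rw [mul_sub, mul_inv_cancel₀ hP0, mul_one]
    rw [Rfun]
    calc (1 - ∏ i, x i)⁻¹ * ((((∏ a, (1 - x a)⁻¹) * T) * ((-1)^n * (∏ i, x i))) *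
          ((-1)^n * ((∏ i, x i)⁻¹ - 1)))
        = ((∏ a, (1 - x a)⁻¹) * T) * (((-1)^n * (-1)^n) *
            ((1 - ∏ i, x i)⁻¹ * ((∏ i, x i) * ((∏ i, x i)⁻¹ - 1)))) := by ring
      _ = (∏ a, (1 - x a)⁻¹) * T := by
          rw [h2, h3, one_mul, inv_mul_cancel₀ hP, mul_one]

end AuxSST

/-- The antisymmetrization over `X_1, …, X_n` of
`∏_{i=1}^n X_i^{i-1} (1-∏_{j=i}^n X_j)⁻¹` equals
`∏_{i=1}^n (1-X_i)⁻¹ · ∏_{1≤i<j≤n} (X_j-X_i)/(1-X_i X_j)`,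
in the field of rational functions in `X_1, …, X_n` over `ℚ`. -/
theorem stmt2 (n : ℕ)
    (Y : Fin n → FractionRing (MvPolynomial (Fin n) ℚ))
    (hY : ∀ i, Y i = algebraMap (MvPolynomial (Fin n) ℚ)
      (FractionRing (MvPolynomial (Fin n) ℚ)) (MvPolynomial.X i)) :
    (∑ σ : Equiv.Perm (Fin n),
      ((Equiv.Perm.sign σ : ℤ) : FractionRing (MvPolynomial (Fin n) ℚ)) *
        ∏ i : Fin n, (Y (σ i)) ^ (i : ℕ) * (1 - ∏ j ∈ Finset.Ici i, Y (σ j))⁻¹)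
    = (∏ i : Fin n, (1 - Y i)⁻¹) *
        ∏ i : Fin n, ∏ j ∈ Finset.Ioi i, (Y j - Y i) * (1 - Y i * Y j)⁻¹ := by

  classical
  have halg : Function.Injective (algebraMap (MvPolynomial (Fin n) ℚ)
      (FractionRing (MvPolynomial (Fin n) ℚ))) :=
    IsFractionRing.injective _ _
  have hinj : Function.Injective Y := by
    intro a b hab
    rw [hY a, hY b] at hab
    exact MvPolynomial.X_injective (halg hab)
  have h0 : ∀ i, Y i ≠ 0 := by
    intro i h
    rw [hY i] at h
    have h2 : (MvPolynomial.X i : MvPolynomial (Fin n) ℚ) = 0 := halg (by simpa using h)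
    exact MvPolynomial.X_ne_zero i h2
  have h1 : ∀ i, Y i ≠ -1 := by
    intro i h
    rw [hY i] at h
    have h' : algebraMap (MvPolynomial (Fin n) ℚ) (FractionRing (MvPolynomial (Fin n) ℚ))
        (MvPolynomial.X i)
        = algebraMap (MvPolynomial (Fin n) ℚ) (FractionRing (MvPolynomial (Fin n) ℚ)) (-1) := by
      rw [map_neg, map_one]; exact h
    have h2 := halg h'
    have hc := congrArg MvPolynomial.constantCoeff h2
    simp [MvPolynomial.constantCoeff_X] at hc
  have hS : ∀ S : Finset (Fin n), S.Nonempty → ∏ i ∈ S, Y i ≠ 1 := by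
    intro S hSne h
    have heq : ∏ i ∈ S, Y i
        = algebraMap (MvPolynomial (Fin n) ℚ) (FractionRing (MvPolynomial (Fin n) ℚ))
          (∏ i ∈ S, MvPolynomial.X i) := by
      rw [map_prod]; exact Finset.prod_congr rfl fun i _ => hY i
    rw [heq] at h
    have h2 : (∏ i ∈ S, MvPolynomial.X i : MvPolynomial (Fin n) ℚ) = 1 :=
      halg (by simpa using h)
    have hc := congrArg MvPolynomial.constantCoeff h2
    rw [map_prod] at hc
    obtain ⟨i0, hi0⟩ := hSne
    rw [Finset.prod_eq_zero hi0 (MvPolynomial.constantCoeff_X (R := ℚ) i0)] at hc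
    simp at hc
  exact main_id n Y hinj h0 h1 hS
end

section
/- Let T be an alternating sign triangle of order n and let j_1 < ... < j_{n-1} be the positions of its 1-columns other than the central column, indexed from 0 to 2n−3 from the left (skipping the central column). Then for every i ∈ {1,...,n−1}, the interval [n−1−i, n−2+i] contains at least i of the values j_1,...,j_{n-1}. -/
open Finset

/-- An alternating sign triangle (AST) of order `n`: rows `i = 1,…,n`, row `i`
occupying columns `j = i,…,2n−i` (entries outside this region are `0`), entries in
`{−1,0,1}`, nonzero entries alternating in sign along each row and each column,
all row sums equal to `1`, and the topmost nonzero entry of each column equal to `1`. -/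
structure AST (n : ℕ) where
  a : ℕ → ℕ → ℤ
  zero_outside : ∀ i j, ¬(1 ≤ i ∧ i ≤ n ∧ i ≤ j ∧ j ≤ 2 * n - i) → a i j = 0
  entries : ∀ i j, a i j = -1 ∨ a i j = 0 ∨ a i j = 1
  rowsum : ∀ i, 1 ≤ i → i ≤ n → (∑ j ∈ Finset.Icc i (2 * n - i), a i j) = 1
  rowalt : ∀ i j₁ j₂, j₁ < j₂ → a i j₁ ≠ 0 → a i j₂ ≠ 0 →
    (∀ j, j₁ < j → j < j₂ → a i j = 0) → a i j₁ = -a i j₂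
  colalt : ∀ j i₁ i₂, i₁ < i₂ → a i₁ j ≠ 0 → a i₂ j ≠ 0 →
    (∀ i, i₁ < i → i < i₂ → a i j = 0) → a i₁ j = -a i₂ j
  coltop : ∀ j i, a i j ≠ 0 → (∀ i', i' < i → a i' j = 0) → a i j = 1

/-- The sum of the entries of column `j` of an AST. -/
def colsum (n : ℕ) (T : AST n) (j : ℕ) : ℤ := ∑ i ∈ Finset.Icc 1 n, T.a i j

/-- The set of positions (indexed `0,…,2n−3` from the left, skipping the central
column `n`) of the `1`-columns of `T` other than the central column. -/
def onePositions (n : ℕ) (T : AST n) : Finset ℕ :=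
  ((Finset.Icc 1 (2 * n - 1)).filter (fun j => j ≠ n ∧ colsum n T j = 1)).image
    (fun j => if j < n then j - 1 else j - 2)

lemma key_inv (n : ℕ) (T : AST n) (j m : ℕ) :
    ((∀ i, i ≤ m → T.a i j = 0) ∧ (∑ i ∈ Finset.Icc 1 m, T.a i j) = 0) ∨
    (∃ i₀, 1 ≤ i₀ ∧ i₀ ≤ m ∧ T.a i₀ j ≠ 0 ∧
      (∀ k, i₀ < k → k ≤ m → T.a k j = 0) ∧
      2 * (∑ i ∈ Finset.Icc 1 m, T.a i j) = T.a i₀ j + 1) := by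
  induction m with
  | zero =>
    left
    refine ⟨fun i hi => T.zero_outside i j (by omega), by simp⟩
  | succ m ih =>
    have hsum : (∑ i ∈ Finset.Icc 1 (m+1), T.a i j)
        = (∑ i ∈ Finset.Icc 1 m, T.a i j) + T.a (m+1) j := by
      rw [Finset.sum_Icc_succ_top (by omega)]
    by_cases hz : T.a (m+1) j = 0
    · rcases ih with ⟨h0, hs⟩ | ⟨i₀, h1, h2, h3, h4, h5⟩
      · left
        refine ⟨fun i hi => ?_, by rw [hsum, hs, hz]; ring⟩
        rcases Nat.lt_or_ge i (m+1) with h | h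
        · exact h0 i (by omega)
        · have hi' : i = m+1 := by omega
          rw [hi']; exact hz
      · right
        refine ⟨i₀, h1, by omega, h3, fun k hk hk' => ?_, by rw [hsum, hz]; linarith⟩
        rcases Nat.lt_or_ge k (m+1) with h | h
        · exact h4 k hk (by omega)
        · have hk'' : k = m+1 := by omega
          rw [hk'']; exact hz
    · rcases ih with ⟨h0, hs⟩ | ⟨i₀, h1, h2, h3, h4, h5⟩
      · have htop : T.a (m+1) j = 1 := by
          apply T.coltop j (m+1) hz
          intro i' hi'
          exact h0 i' (by omega)
        right
        exact ⟨m+1, by omega, le_refl _, hz, fun k hk hk' => by omega,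
          by rw [hsum, hs, htop]; ring⟩
      · have halt : T.a i₀ j = - T.a (m+1) j :=
          T.colalt j i₀ (m+1) (by omega) h3 hz (fun k hk hk' => h4 k hk (by omega))
        right
        refine ⟨m+1, by omega, le_refl _, hz, fun k hk hk' => by omega, ?_⟩
        rw [hsum]; linarith

lemma prefix_bounds (n : ℕ) (T : AST n) (j m : ℕ) :
    0 ≤ (∑ i ∈ Finset.Icc 1 m, T.a i j) ∧ (∑ i ∈ Finset.Icc 1 m, T.a i j) ≤ 1 := by
  rcases key_inv n T j m with ⟨_, hs⟩ | ⟨i₀, _, _, hne, _, h5⟩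
  · rw [hs]; omega
  · rcases T.entries i₀ j with h | h | h
    · rw [h] at h5; omega
    · exact absurd h hne
    · rw [h] at h5; omega

lemma colsum_bounds (n : ℕ) (T : AST n) (j : ℕ) :
    0 ≤ colsum n T j ∧ colsum n T j ≤ 1 := prefix_bounds n T j n

lemma tail_le_colsum (n : ℕ) (T : AST n) (j r : ℕ) (hr : 1 ≤ r) :
    (∑ i ∈ Finset.Icc r n, T.a i j) ≤ colsum n T j := by
  by_cases hrn : r ≤ n
  · have hsplit : (∑ i ∈ Finset.Ioc 0 (r-1), T.a i j) + (∑ i ∈ Finset.Ioc (r-1) n, T.a i j)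
        = ∑ i ∈ Finset.Ioc 0 n, T.a i j :=
      Finset.sum_Ioc_consecutive _ (Nat.zero_le _) (by omega)
    have h1 : Finset.Icc r n = Finset.Ioc (r-1) n := by
      rw [← Finset.Icc_add_one_left_eq_Ioc]; congr 1; omega
    have h2 : Finset.Icc 1 (r-1) = Finset.Ioc 0 (r-1) := by
      rw [← Finset.Icc_add_one_left_eq_Ioc, zero_add]
    have h3 : Finset.Icc 1 n = Finset.Ioc 0 n := by
      rw [← Finset.Icc_add_one_left_eq_Ioc, zero_add]
    have hpre := (prefix_bounds n T j (r-1)).1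
    rw [h2] at hpre
    unfold colsum
    rw [h1, h3, ← hsplit]
    linarith
  · have : Finset.Icc r n = ∅ := by
      rw [Finset.Icc_eq_empty_iff]; omega
    rw [this]
    simpa using (colsum_bounds n T j).1

/-- For an AST of order `n` with `1`-column positions
`j_1 < … < j_{n-1}` (central column excluded, positions indexed from `0`), every
interval `[n−1−i, n−2+i]` with `1 ≤ i ≤ n−1` contains at least `i` of these positions. -/
theorem stmt10 (n : ℕ) (hn : 1 ≤ n) (T : AST n) :
    ∀ i, 1 ≤ i → i ≤ n - 1 →
      i ≤ ((onePositions n T).filter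
        (fun p => n - 1 - i ≤ p ∧ p ≤ n - 2 + i)).card := by
  intro i hi1 hi2
  have hn2 : 2 ≤ n := by omega
  set C : Finset ℕ := Finset.Icc (n - i) (n + i) with hC
  set R : Finset ℕ := Finset.Icc (n - i) n with hR
  -- Step 1: sum of tails over C equals i+1
  have hrow : ∀ i' ∈ R, (∑ j ∈ C, T.a i' j) = 1 := by
    intro i' hi'
    rw [Finset.mem_Icc] at hi'
    have hsub : Finset.Icc i' (2 * n - i') ⊆ C := by
      apply Finset.Icc_subset_Icc <;> omega
    rw [← T.rowsum i' (by omega) hi'.2]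
    symm
    apply Finset.sum_subset hsub
    intro j hj hj'
    rw [Finset.mem_Icc] at hj'
    exact T.zero_outside i' j (by omega)
  have hswap : (∑ j ∈ C, ∑ i' ∈ R, T.a i' j) = (i + 1 : ℤ) := by
    rw [Finset.sum_comm]
    rw [Finset.sum_congr rfl hrow]
    simp [hR, Nat.card_Icc]
    omega
  -- Step 2: each inner sum is a tail sum ≤ colsum
  have htail : ∀ j ∈ C, (∑ i' ∈ R, T.a i' j) ≤ colsum n T j := by
    intro j _
    exact tail_le_colsum n T j (n - i) (by omega)
  have hcol : ∀ j ∈ C, colsum n T j ≤ (if colsum n T j = 1 then (1:ℤ) else 0) := by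
    intro j _
    have := colsum_bounds n T j
    split <;> omega
  have hchain : (i + 1 : ℤ) ≤ ((C.filter (fun j => colsum n T j = 1)).card : ℤ) := by
    calc (i + 1 : ℤ) = ∑ j ∈ C, ∑ i' ∈ R, T.a i' j := hswap.symm
      _ ≤ ∑ j ∈ C, colsum n T j := Finset.sum_le_sum htail
      _ ≤ ∑ j ∈ C, (if colsum n T j = 1 then (1:ℤ) else 0) := Finset.sum_le_sum hcol
      _ = ((C.filter (fun j => colsum n T j = 1)).card : ℤ) := by
          rw [Finset.sum_boole]
  have hcard1 : i + 1 ≤ (C.filter (fun j => colsum n T j = 1)).card := by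
    exact_mod_cast hchain
  -- Step 3: remove the central column
  set E : Finset ℕ := C.filter (fun j => j ≠ n ∧ colsum n T j = 1) with hE
  have hEcard : i ≤ E.card := by
    have hsub : C.filter (fun j => colsum n T j = 1) ⊆ insert n E := by
      intro j hj
      rw [Finset.mem_filter] at hj
      by_cases hjn : j = n
      · rw [hjn]; exact Finset.mem_insert_self n E
      · exact Finset.mem_insert_of_mem (by rw [hE, Finset.mem_filter]; exact ⟨hj.1, hjn, hj.2⟩)
    have := Finset.card_le_card hsub
    have := Finset.card_insert_le n E
    omega
  -- Step 4: map to positions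
  set f : ℕ → ℕ := fun j => if j < n then j - 1 else j - 2 with hf
  have hinj : Set.InjOn f E := by
    intro j₁ hj₁ j₂ hj₂ heq
    replace hj₁ := Finset.mem_coe.mp hj₁
    replace hj₂ := Finset.mem_coe.mp hj₂
    rw [hE, Finset.mem_filter, hC, Finset.mem_Icc] at hj₁ hj₂
    simp only [hf] at heq
    split_ifs at heq <;> omega
  have himg : E.image f ⊆ (onePositions n T).filter
      (fun p => n - 1 - i ≤ p ∧ p ≤ n - 2 + i) := by
    intro p hp
    rw [Finset.mem_image] at hp
    obtain ⟨j, hj, hpj⟩ := hp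
    rw [hE, Finset.mem_filter, hC, Finset.mem_Icc] at hj
    rw [Finset.mem_filter]
    constructor
    · rw [onePositions, Finset.mem_image]
      refine ⟨j, ?_, hpj⟩
      rw [Finset.mem_filter, Finset.mem_Icc]
      exact ⟨⟨by omega, by omega⟩, hj.2⟩
    · simp only [hf] at hpj
      split_ifs at hpj <;> omega
  calc i ≤ E.card := hEcard
    _ = (E.image f).card := (Finset.card_image_of_injOn hinj).symm
    _ ≤ _ := Finset.card_le_card himg
end

section
/- In an alternating sign triangle T of order n, for each i ∈ {1,...,n−1}, the triangular subarray T_i consisting of the bottom i+1 rows of T has entry sum i+1, and T_i contains at least i+1 columns whose sum is 1; moreover every column of T_i with sum 1 is also a 1-column of T. -/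
open Finset

/-- The sum of the entries of column `j` of the subarray `T_i` consisting of the
bottom `i+1` rows (rows `n−i,…,n`) of an AST `T` of order `n`. -/
def colsumBottom (n : ℕ) (T : AST n) (i j : ℕ) : ℤ := ∑ r ∈ Finset.Icc (n - i) n, T.a r j


/-- Alternating sum lemma: either all entries in `[lo,hi]` vanish and the sum is 0,
or there are first/last nonzero entries `m₁ ≤ m₂` with `2 * sum = f m₁ + f m₂`. -/
lemma alt_sum_lemma (f : ℕ → ℤ)
    (halt : ∀ i₁ i₂, i₁ < i₂ → f i₁ ≠ 0 → f i₂ ≠ 0 →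
      (∀ i, i₁ < i → i < i₂ → f i = 0) → f i₁ = -f i₂)
    (lo hi : ℕ) :
    ((∀ r, lo ≤ r → r ≤ hi → f r = 0) ∧ ∑ r ∈ Finset.Icc lo hi, f r = 0) ∨
    (∃ m₁ m₂, lo ≤ m₁ ∧ m₁ ≤ m₂ ∧ m₂ ≤ hi ∧ f m₁ ≠ 0 ∧ f m₂ ≠ 0 ∧
      (∀ r, lo ≤ r → r < m₁ → f r = 0) ∧ (∀ r, m₂ < r → r ≤ hi → f r = 0) ∧
      2 * ∑ r ∈ Finset.Icc lo hi, f r = f m₁ + f m₂) := by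
  induction hi with
  | zero =>
    rcases Nat.eq_zero_or_pos lo with rfl | hlo
    · by_cases h0 : f 0 = 0
      · left
        refine ⟨?_, by simp [h0]⟩
        intro r h1 h2
        have hr : r = 0 := by omega
        rw [hr]; exact h0
      · right
        refine ⟨0, 0, le_refl _, le_refl _, le_refl _, h0, h0,
          by intro r hr1 hr2; omega, by intro r hr1 hr2; omega, by simp; ring⟩
    · left
      refine ⟨by intro r h1 h2; omega, ?_⟩
      rw [Finset.Icc_eq_empty (by omega)]; simp
  | succ h ih =>
    by_cases hle : lo ≤ h + 1
    · have hsum : ∑ r ∈ Finset.Icc lo (h+1), f r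
          = (∑ r ∈ Finset.Icc lo h, f r) + f (h+1) :=
        Finset.sum_Icc_succ_top hle f
      by_cases hz : f (h+1) = 0
      · rcases ih with ⟨hall, hs⟩ | ⟨m₁, m₂, hm1, hm12, hm2, hn1, hn2, hlow, hhigh, heq⟩
        · left
          refine ⟨?_, by rw [hsum, hs, hz]; ring⟩
          intro r h1 h2
          rcases Nat.lt_or_ge r (h+1) with h' | h'
          · exact hall r h1 (by omega)
          · have : r = h + 1 := by omega
            rw [this]; exact hz
        · right
          refine ⟨m₁, m₂, hm1, hm12, by omega, hn1, hn2, hlow, ?_, ?_⟩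
          · intro r hr1 hr2
            rcases Nat.lt_or_ge r (h+1) with h' | h'
            · exact hhigh r hr1 (by omega)
            · have : r = h + 1 := by omega
              rw [this]; exact hz
          · rw [hsum, hz]; rw [show (∑ r ∈ Finset.Icc lo h, f r) + 0 = ∑ r ∈ Finset.Icc lo h, f r by ring]; exact heq
      · rcases ih with ⟨hall, hs⟩ | ⟨m₁, m₂, hm1, hm12, hm2, hn1, hn2, hlow, hhigh, heq⟩
        · right
          refine ⟨h+1, h+1, hle, le_refl _, le_refl _, hz, hz, ?_, by intro r hr1 hr2; omega, ?_⟩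
          · intro r h1 h2; exact hall r h1 (by omega)
          · rw [hsum, hs]; ring
        · right
          have hkey : f m₂ = - f (h+1) := by
            apply halt m₂ (h+1) (by omega) hn2 hz
            intro r hr1 hr2
            exact hhigh r hr1 (by omega)
          refine ⟨m₁, h+1, hm1, by omega, le_refl _, hn1, hz, hlow, by intro r hr1 hr2; omega, ?_⟩
          rw [hsum]
          have : 2 * ((∑ r ∈ Finset.Icc lo h, f r) + f (h+1))
              = (f m₁ + f m₂) + 2 * f (h+1) := by rw [← heq]; ring
          rw [this, hkey]; ring
    · left
      refine ⟨by intro r h1 h2; omega, ?_⟩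
      rw [Finset.Icc_eq_empty (by omega)]; simp

/-- For each `1 ≤ i ≤ n−1`, the bottom `i+1` rows `T_i` of an AST `T` of
order `n` have entry sum `i+1`, at least `i+1` columns of `T_i` sum to `1`, and every
column of `T_i` with sum `1` is a `1`-column of `T`. -/
theorem stmt11 (n : ℕ) (hn : 1 ≤ n) (T : AST n) (i : ℕ) (h1 : 1 ≤ i) (h2 : i ≤ n - 1) :
    (∑ r ∈ Finset.Icc (n - i) n, ∑ j ∈ Finset.Icc r (2 * n - r), T.a r j) = (i : ℤ) + 1 ∧
    (i + 1 : ℕ) ≤ ((Finset.Icc 1 (2 * n - 1)).filter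
      (fun j => colsumBottom n T i j = 1)).card ∧
    (∀ j, colsumBottom n T i j = 1 → colsum n T j = 1) := by
  have hni : 1 ≤ n - i := by omega
  have halt : ∀ j : ℕ, ∀ i₁ i₂, i₁ < i₂ → T.a i₁ j ≠ 0 → T.a i₂ j ≠ 0 →
      (∀ r, i₁ < r → r < i₂ → T.a r j = 0) → T.a i₁ j = -T.a i₂ j :=
    fun j i₁ i₂ h hn1 hn2 hz => T.colalt j i₁ i₂ h hn1 hn2 hz
  -- Part A
  have partA : (∑ r ∈ Finset.Icc (n - i) n, ∑ j ∈ Finset.Icc r (2 * n - r), T.a r j)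
      = (i : ℤ) + 1 := by
    have hr1 : ∀ r ∈ Finset.Icc (n - i) n, (∑ j ∈ Finset.Icc r (2 * n - r), T.a r j) = 1 := by
      intro r hr
      simp only [Finset.mem_Icc] at hr
      exact T.rowsum r (by omega) hr.2
    rw [Finset.sum_congr rfl hr1, Finset.sum_const, Nat.card_Icc, nsmul_eq_mul, mul_one]
    have : n + 1 - (n - i) = i + 1 := by omega
    rw [this]; push_cast; ring
  refine ⟨partA, ?_, ?_⟩
  · -- Part B
    have hrow : ∀ r ∈ Finset.Icc (n - i) n,
        (∑ j ∈ Finset.Icc r (2 * n - r), T.a r j)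
          = ∑ j ∈ Finset.Icc 1 (2 * n - 1), T.a r j := by
      intro r hr
      simp only [Finset.mem_Icc] at hr
      apply Finset.sum_subset
      · intro j hj; simp only [Finset.mem_Icc] at hj ⊢; omega
      · intro j hj hnj
        simp only [Finset.mem_Icc] at hj hnj
        exact T.zero_outside r j (by omega)
    have hswap : (∑ j ∈ Finset.Icc 1 (2 * n - 1), colsumBottom n T i j) = (i : ℤ) + 1 := by
      unfold colsumBottom
      rw [Finset.sum_comm]
      rw [Finset.sum_congr rfl (fun r hr => (hrow r hr).symm)]
      exact partA
    have hle1 : ∀ j, colsumBottom n T i j ≤ 1 := by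
      intro j
      have hcb : colsumBottom n T i j = ∑ r ∈ Finset.Icc (n - i) n, T.a r j := rfl
      rcases alt_sum_lemma (fun r => T.a r j) (halt j) (n - i) n with
        ⟨_, hs⟩ | ⟨m₁, m₂, _, _, _, hn1, hn2, _, _, heq⟩
      · rw [hcb, hs]; norm_num
      · have e1 := T.entries m₁ j
        have e2 := T.entries m₂ j
        rw [hcb]; omega
    have hA : (∑ j ∈ (Finset.Icc 1 (2 * n - 1)).filter (fun j => colsumBottom n T i j = 1),
        colsumBottom n T i j)
        = (((Finset.Icc 1 (2 * n - 1)).filter (fun j => colsumBottom n T i j = 1)).card : ℤ) := by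
      rw [Finset.sum_congr rfl (fun j hj => (Finset.mem_filter.mp hj).2)]
      simp
    have hB : (∑ j ∈ (Finset.Icc 1 (2 * n - 1)).filter (fun j => ¬ colsumBottom n T i j = 1),
        colsumBottom n T i j) ≤ 0 := by
      apply Finset.sum_nonpos
      intro j hj
      have := (Finset.mem_filter.mp hj).2
      have := hle1 j
      omega
    have hsplit := Finset.sum_filter_add_sum_filter_not (Finset.Icc 1 (2 * n - 1))
      (fun j => colsumBottom n T i j = 1) (fun j => colsumBottom n T i j)
    have : ((i : ℤ) + 1) ≤ (((Finset.Icc 1 (2 * n - 1)).filter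
        (fun j => colsumBottom n T i j = 1)).card : ℤ) := by
      rw [← hsplit] at hswap
      omega
    exact_mod_cast this
  · -- Part C
    intro j hj
    have hs : (∑ r ∈ Finset.Icc (n - i) n, T.a r j) = 1 := hj
    rcases alt_sum_lemma (fun r => T.a r j) (halt j) (n - i) n with
      ⟨_, hs0⟩ | ⟨m₁, m₂, hm1, hm12, hm2, hmn1, hmn2, hmlow, hmhigh, hmeq⟩
    · rw [hs0] at hs; exact absurd hs (by norm_num)
    · have e1 := T.entries m₁ j
      have e2 := T.entries m₂ j
      have hfm1 : T.a m₁ j = 1 := by omega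
      have htop : (∑ r ∈ Finset.Icc 1 (n - i - 1), T.a r j) = 0 := by
        rcases alt_sum_lemma (fun r => T.a r j) (halt j) 1 (n - i - 1) with
          ⟨_, ht0⟩ | ⟨k₁, k₂, hk1, hk12, hk2, hkn1, hkn2, hklow, hkhigh, hkeq⟩
        · exact ht0
        · have hk1top : T.a k₁ j = 1 := by
            apply T.coltop j k₁ hkn1
            intro i' hi'
            rcases Nat.eq_zero_or_pos i' with rfl | hi0
            · exact T.zero_outside 0 j (by omega)
            · exact hklow i' hi0 hi'
          have halt2 : T.a k₂ j = -T.a m₁ j := by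
            apply T.colalt j k₂ m₁ (by omega) hkn2 hmn1
            intro r hr1 hr2
            rcases Nat.lt_or_ge r (n - i) with h' | h'
            · exact hkhigh r hr1 (by omega)
            · exact hmlow r h' hr2
          rw [hk1top, halt2, hfm1] at hkeq
          omega
      have e3 : Finset.Icc 1 (n - i - 1) = Finset.Ioc 0 (n - i - 1) := by
        rw [← Finset.Icc_add_one_left_eq_Ioc]; rfl
      have e4 : Finset.Icc (n - i) n = Finset.Ioc (n - i - 1) n := by
        rw [← Finset.Icc_add_one_left_eq_Ioc]; congr 1; omega
      have e5 : Finset.Icc 1 n = Finset.Ioc 0 n := by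
        rw [← Finset.Icc_add_one_left_eq_Ioc]; rfl
      have hsplit : (∑ r ∈ Finset.Icc 1 (n - i - 1), T.a r j)
          + (∑ r ∈ Finset.Icc (n - i) n, T.a r j) = ∑ r ∈ Finset.Icc 1 n, T.a r j := by
        rw [e3, e4, e5]
        exact Finset.sum_Ioc_consecutive _ (by omega) (by omega)
      have : colsum n T j = ∑ r ∈ Finset.Icc 1 n, T.a r j := rfl
      rw [this, ← hsplit, htop, hs]; norm_num
end

section
/- For any positive integer n, the sum over all rows in the central column of an odd OOSASM triangle of order n equals 0 if n is even and 1 if n is odd; consequently an odd OOSASM triangle of order n has exactly ⌊n/2⌋ 1-columns other than the central column. -/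
open Finset

/-- The nonzero entries of a list alternate in sign. -/
def altList (l : List ℤ) : Prop :=
  List.Chain' (fun x y => x = -y) (l.filter (fun x => decide (x ≠ 0)))

/-- For a triangular array `a` of order `n` and `j ∈ {0,…,n−1}`, the concatenation of
column `j` (downwards), row `j+1` (left to right, columns `j+1,…,2n−j−1`) and
column `2n−j` (upwards). -/
def oseq (n : ℕ) (a : ℕ → ℕ → ℤ) (j : ℕ) : List ℤ :=
  ((List.range j).map (fun t => a (t + 1) j)) ++
    ((List.range (2 * n - 2 * j - 1)).map (fun t => a (j + 1) (j + 1 + t))) ++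
    ((List.range j).map (fun t => a (j - t) (2 * n - j)))

/-- The central column (column `n`) of a triangular array of order `n`, top to bottom. -/
def centerCol (n : ℕ) (a : ℕ → ℕ → ℤ) : List ℤ :=
  (List.range n).map (fun t => a (t + 1) n)

/-- An odd OOSASM triangle of order `n`: a triangular array (rows `i = 1,…,n`, row `i`
occupying columns `j = i,…,2n−i`, entries in `{−1,0,1}`, zero outside the triangle)
such that for each `j ∈ {0,…,n−1}` the concatenated sequence of column `j`, row `j+1`
and column `2n−j` has alternating nonzero entries summing to `1`, and in the central
column the nonzero entries alternate with topmost nonzero entry `1`. -/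
structure OOSASMTri (n : ℕ) where
  a : ℕ → ℕ → ℤ
  zero_outside : ∀ i j, ¬(1 ≤ i ∧ i ≤ n ∧ i ≤ j ∧ j ≤ 2 * n - i) → a i j = 0
  entries : ∀ i j, a i j = -1 ∨ a i j = 0 ∨ a i j = 1
  seqAlt : ∀ j, j < n → altList (oseq n a j)
  seqSum : ∀ j, j < n → (oseq n a j).sum = 1
  centerAlt : altList (centerCol n a)
  centerTop : ∀ x, ((centerCol n a).filter (fun y => decide (y ≠ 0))).head? = some x → x = 1

/-- The sum of the entries of column `j`. -/
def ocolsum (n : ℕ) (T : OOSASMTri n) (j : ℕ) : ℤ := ∑ i ∈ Finset.Icc 1 n, T.a i j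

/- ------------------ auxiliary lemmas ------------------ -/

lemma sum_filter_nz (l : List ℤ) : (l.filter (fun x => decide (x ≠ 0))).sum = l.sum := by
  induction l with
  | nil => rfl
  | cons a t ih =>
    simp only [List.filter_cons, List.sum_cons]
    by_cases h : a = 0
    · rw [if_neg (by simp [h]), ih, h, zero_add]
    · rw [if_pos (by simp [h]), List.sum_cons, ih]

lemma chainSum : ∀ m : List ℤ, List.Chain' (fun x y => x = -y) m →
    (m.sum = 0 ∧ m.length % 2 = 0) ∨
    (m.sum = m.head?.getD 0 ∧ m.sum = m.getLast?.getD 0 ∧ m.length % 2 = 1)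
  | [], _ => Or.inl ⟨rfl, rfl⟩
  | [a], _ => Or.inr ⟨by simp, by simp, rfl⟩
  | a :: b :: t, h => by
    rw [List.Chain', List.isChain_cons_cons] at h
    obtain ⟨hab, h2⟩ := h
    have ht := h2.tail
    have hsum : (a :: b :: t).sum = t.sum := by simp [hab]
    rcases chainSum t ht with ⟨h0, hl⟩ | ⟨hh, hlast, hl⟩
    · exact Or.inl ⟨by rw [hsum, h0], by simp only [List.length_cons]; omega⟩
    · cases t with
      | nil => simp at hl
      | cons c t' =>
        rw [List.isChain_cons_cons] at h2
        have hac : a = c := by rw [hab, h2.1]; ring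
        refine Or.inr ⟨?_, ?_, ?_⟩
        · rw [hsum]
          simpa [hac] using hh
        · rw [hsum, List.getLast?_cons_cons, List.getLast?_cons_cons]
          exact hlast
        · simp only [List.length_cons] at hl ⊢; omega

lemma prefix01 (p q : List ℤ) (h : altList (p ++ q)) (hs : (p ++ q).sum = 1) :
    p.sum = 0 ∨ p.sum = 1 := by
  unfold altList at h
  rw [List.filter_append] at h
  have hfs : ((p.filter fun x => decide (x ≠ 0)) ++ (q.filter fun x => decide (x ≠ 0))).sum = 1 := by
    rw [← List.filter_append, sum_filter_nz]; exact hs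
  have hp : p.sum = (p.filter fun x => decide (x ≠ 0)).sum := (sum_filter_nz p).symm
  obtain ⟨hc1, hc2, -⟩ := List.isChain_append.mp h
  rcases chainSum _ h with ⟨h0, -⟩ | ⟨hh, -, -⟩
  · rw [hfs] at h0; exact absurd h0 one_ne_zero
  · rw [hfs] at hh
    cases hfE : (p.filter fun x => decide (x ≠ 0)) with
    | nil => left; rw [hp, hfE]; rfl
    | cons x l =>
      rw [hfE] at hh hc1
      have hx : x = 1 := by simpa using hh.symm
      rcases chainSum (x :: l) hc1 with ⟨h0, -⟩ | ⟨hh', -, -⟩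
      · left; rw [hp, hfE]; exact h0
      · right; rw [hp, hfE, hh']; simp [hx]

lemma suffix01 (p q : List ℤ) (h : altList (p ++ q)) (hs : (p ++ q).sum = 1) :
    q.sum = 0 ∨ q.sum = 1 := by
  unfold altList at h
  rw [List.filter_append] at h
  have hfs : ((p.filter fun x => decide (x ≠ 0)) ++ (q.filter fun x => decide (x ≠ 0))).sum = 1 := by
    rw [← List.filter_append, sum_filter_nz]; exact hs
  have hq : q.sum = (q.filter fun x => decide (x ≠ 0)).sum := (sum_filter_nz q).symm
  obtain ⟨hc1, hc2, -⟩ := List.isChain_append.mp h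
  rcases chainSum _ h with ⟨h0, -⟩ | ⟨-, hlast, -⟩
  · rw [hfs] at h0; exact absurd h0 one_ne_zero
  · rw [hfs] at hlast
    rcases eq_or_ne (q.filter fun x => decide (x ≠ 0)) [] with hfE | hne
    · left; rw [hq, hfE]; rfl
    · obtain ⟨y, hy⟩ := Option.isSome_iff_exists.mp (List.getLast?_isSome.mpr hne)
      have hy1 : y = 1 := by
        rw [List.getLast?_append, hy] at hlast
        simpa using hlast.symm
      rcases chainSum _ hc2 with ⟨h0, -⟩ | ⟨-, hlast', -⟩
      · left; rw [hq]; exact h0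
      · right; rw [hq, hlast', hy]; simp [hy1]

lemma listSumRange (f : ℕ → ℤ) (k : ℕ) :
    ((List.range k).map f).sum = ∑ t ∈ Finset.range k, f t := by
  rw [← Multiset.sum_coe]; rfl

lemma shiftSum (f : ℕ → ℤ) (k : ℕ) :
    ((List.range k).map (fun t => f (t + 1))).sum = ∑ i ∈ Finset.Icc 1 k, f i := by
  rw [listSumRange]
  rw [show Finset.Icc 1 k = Finset.Ico 1 (k + 1) from (Finset.Ico_add_one_right_eq_Icc 1 k).symm]
  rw [Finset.sum_Ico_eq_sum_range]
  simp only [Nat.add_sub_cancel]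
  exact Finset.sum_congr rfl fun t _ => by rw [Nat.add_comm]

lemma count01 (s : Finset ℕ) (g : ℕ → ℤ) (h : ∀ j ∈ s, g j = 0 ∨ g j = 1) :
    ∑ j ∈ s, g j = ((s.filter (fun j => g j = 1)).card : ℤ) := by
  classical
  rw [← Finset.sum_filter_add_sum_filter_not s (fun j => g j = 1)]
  have h1 : ∑ j ∈ s.filter (fun j => g j = 1), g j
      = ((s.filter (fun j => g j = 1)).card : ℤ) := by
    rw [Finset.sum_congr rfl (fun j hj => (Finset.mem_filter.mp hj).2)]
    simp
  have h2 : ∑ j ∈ s.filter (fun j => ¬ g j = 1), g j = 0 :=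
    Finset.sum_eq_zero fun j hj => by
      have h3 := h j (Finset.mem_filter.mp hj).1
      have h4 := (Finset.mem_filter.mp hj).2
      tauto
  rw [h1, h2, add_zero]

theorem stmt12 (n : ℕ) (hn : 1 ≤ n) (T : OOSASMTri n) :
    ocolsum n T n = (if Even n then 0 else 1) ∧
    ((Finset.Icc 1 (2 * n - 1)).filter
      (fun j => j ≠ n ∧ ocolsum n T j = 1)).card = n / 2 := by
  classical
  have hg' : ∀ j, ocolsum n T j = ∑ i ∈ Finset.Icc 1 n, T.a i j := fun j => rfl
  -- column prefix sums
  have hC : ∀ j, j ≤ n → ((List.range j).map (fun t => T.a (t + 1) j)).sum = ocolsum n T j := by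
    intro j hj
    have h1 : ((List.range j).map (fun t => T.a (t + 1) j)).sum
        = ∑ i ∈ Finset.Icc 1 j, T.a i j := shiftSum (fun i => T.a i j) j
    rw [h1, hg']
    apply Finset.sum_subset
    · intro i hi; simp only [Finset.mem_Icc] at *; omega
    · intro i hi hni
      simp only [Finset.mem_Icc] at hi hni
      exact T.zero_outside i j (by omega)
  -- reversed column sums
  have hRev : ∀ j, j < n →
      ((List.range j).map (fun t => T.a (j - t) (2 * n - j))).sum = ocolsum n T (2 * n - j) := by
    intro j hj
    have h1 : ((List.range j).map (fun t => T.a (j - t) (2 * n - j))).sum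
        = ∑ t ∈ Finset.range j, T.a (j - t) (2 * n - j) := listSumRange _ j
    have h2 : ∑ t ∈ Finset.range j, T.a (j - t) (2 * n - j)
        = ∑ t ∈ Finset.range j, T.a (t + 1) (2 * n - j) := by
      rw [← Finset.sum_range_reflect (fun t => T.a (t + 1) (2 * n - j)) j]
      apply Finset.sum_congr rfl
      intro t ht
      simp only [Finset.mem_range] at ht
      congr 1
      omega
    have h3 : (∑ t ∈ Finset.range j, T.a (t + 1) (2 * n - j))
        = ∑ i ∈ Finset.Icc 1 j, T.a i (2 * n - j) := by
      rw [← listSumRange (fun t => T.a (t + 1) (2 * n - j)) j]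
      exact shiftSum (fun i => T.a i (2 * n - j)) j
    rw [h1, h2, h3, hg']
    apply Finset.sum_subset
    · intro i hi; simp only [Finset.mem_Icc] at *; omega
    · intro i hi hni
      simp only [Finset.mem_Icc] at hi hni
      exact T.zero_outside i (2 * n - j) (by omega)
  -- row sums
  have hRow : ∀ j, j < n →
      ((List.range (2 * n - 2 * j - 1)).map (fun t => T.a (j + 1) (j + 1 + t))).sum
        = ∑ k ∈ Finset.Icc 1 (2 * n - 1), T.a (j + 1) k := by
    intro j hj
    have h1 : ((List.range (2 * n - 2 * j - 1)).map (fun t => T.a (j + 1) (j + 1 + t))).sum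
        = ∑ t ∈ Finset.range (2 * n - 2 * j - 1), T.a (j + 1) (j + 1 + t) := listSumRange _ _
    have h2 : ∑ k ∈ Finset.Ico (j + 1) (2 * n - j), T.a (j + 1) k
        = ∑ t ∈ Finset.range (2 * n - j - (j + 1)), T.a (j + 1) (j + 1 + t) :=
      Finset.sum_Ico_eq_sum_range (fun k => T.a (j + 1) k) (j + 1) (2 * n - j)
    rw [show 2 * n - j - (j + 1) = 2 * n - 2 * j - 1 from by omega] at h2
    rw [h1, ← h2]
    apply Finset.sum_subset
    · intro k hk; simp only [Finset.mem_Ico, Finset.mem_Icc] at *; omega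
    · intro k hk hnk
      simp only [Finset.mem_Ico, Finset.mem_Icc] at hk hnk
      exact T.zero_outside (j + 1) k (by omega)
  -- oseq decomposition
  have hOseq : ∀ j, j < n →
      ocolsum n T j + (∑ k ∈ Finset.Icc 1 (2 * n - 1), T.a (j + 1) k)
        + ocolsum n T (2 * n - j) = 1 := by
    intro j hj
    have hs := T.seqSum j hj
    unfold oseq at hs
    rw [List.sum_append, List.sum_append] at hs
    rw [hC j hj.le, hRow j hj, hRev j hj] at hs
    exact hs
  -- sum of all oseq sums
  have hsum_n : (∑ j ∈ Finset.range n, ocolsum n T j)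
      + (∑ j ∈ Finset.range n, ∑ k ∈ Finset.Icc 1 (2 * n - 1), T.a (j + 1) k)
      + (∑ j ∈ Finset.range n, ocolsum n T (2 * n - j)) = (n : ℤ) := by
    rw [← Finset.sum_add_distrib, ← Finset.sum_add_distrib]
    rw [Finset.sum_congr rfl (fun j hj => hOseq j (Finset.mem_range.mp hj))]
    simp
  -- middle term equals total sum S
  have hB : (∑ j ∈ Finset.range n, ∑ k ∈ Finset.Icc 1 (2 * n - 1), T.a (j + 1) k)
      = ∑ k ∈ Finset.Icc 1 (2 * n - 1), ocolsum n T k := by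
    rw [Finset.sum_comm]
    apply Finset.sum_congr rfl
    intro k _
    rw [hg', ← shiftSum (fun i => T.a i k) n, listSumRange]
  -- last term equals the sum over Icc (n+1) (2n)
  have hCtail : ∑ j ∈ Finset.range n, ocolsum n T (2 * n - j)
      = ∑ j ∈ Finset.Icc (n + 1) (2 * n), ocolsum n T j := by
    have h1 : ∑ j ∈ Finset.Icc (n + 1) (2 * n), ocolsum n T j
        = ∑ t ∈ Finset.range n, ocolsum n T (n + 1 + t) := by
      rw [show Finset.Icc (n + 1) (2 * n) = Finset.Ico (n + 1) (2 * n + 1) from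
        (Finset.Ico_add_one_right_eq_Icc _ _).symm]
      rw [Finset.sum_Ico_eq_sum_range]
      rw [show 2 * n + 1 - (n + 1) = n from by omega]
    rw [h1, ← Finset.sum_range_reflect (fun t => ocolsum n T (n + 1 + t)) n]
    apply Finset.sum_congr rfl
    intro t ht
    simp only [Finset.mem_range] at ht
    congr 1
    omega
  have hg2n : ocolsum n T (2 * n) = 0 := by
    rw [hg']
    apply Finset.sum_eq_zero
    intro i hi
    simp only [Finset.mem_Icc] at hi
    exact T.zero_outside i (2 * n) (by omega)
  have htail : ∑ j ∈ Finset.Ico (n + 1) (2 * n), ocolsum n T j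
      = ∑ j ∈ Finset.Icc (n + 1) (2 * n), ocolsum n T j := by
    apply Finset.sum_subset
    · intro x hx; simp only [Finset.mem_Ico, Finset.mem_Icc] at *; omega
    · intro x hx hnx
      simp only [Finset.mem_Ico, Finset.mem_Icc] at hx hnx
      have hx2 : x = 2 * n := by omega
      rw [hx2]; exact hg2n
  have hg0 : ocolsum n T 0 = 0 := by
    rw [hg']
    apply Finset.sum_eq_zero
    intro i hi
    simp only [Finset.mem_Icc] at hi
    exact T.zero_outside i 0 (by omega)
  have hA : ∑ j ∈ Finset.range n, ocolsum n T j = ∑ j ∈ Finset.Ico 1 n, ocolsum n T j := by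
    rw [Finset.range_eq_Ico, ← Finset.sum_Ico_consecutive (fun j => ocolsum n T j) (Nat.zero_le 1) hn]
    have h01 : ∑ j ∈ Finset.Ico 0 1, ocolsum n T j = ocolsum n T 0 := by
      simp [Finset.sum_Ico_eq_sum_range]
    rw [h01, hg0, zero_add]
  have hS1 : ∑ j ∈ Finset.Ico 1 n, ocolsum n T j + ∑ j ∈ Finset.Ico n (2 * n), ocolsum n T j
      = ∑ j ∈ Finset.Ico 1 (2 * n), ocolsum n T j :=
    Finset.sum_Ico_consecutive _ hn (by omega)
  have hS2 : ∑ j ∈ Finset.Ico n (n + 1), ocolsum n T j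
      + ∑ j ∈ Finset.Ico (n + 1) (2 * n), ocolsum n T j
      = ∑ j ∈ Finset.Ico n (2 * n), ocolsum n T j :=
    Finset.sum_Ico_consecutive _ (by omega) (by omega)
  have hS3 : ∑ j ∈ Finset.Ico n (n + 1), ocolsum n T j = ocolsum n T n := by
    simp [Finset.sum_Ico_eq_sum_range]
  have hS0 : ∑ j ∈ Finset.Ico 1 (2 * n), ocolsum n T j
      = ∑ j ∈ Finset.Icc 1 (2 * n - 1), ocolsum n T j :=
    Finset.sum_congr (by ext x; simp only [Finset.mem_Ico, Finset.mem_Icc]; omega)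
      (fun _ _ => rfl)
  have key : 2 * (∑ j ∈ Finset.Icc 1 (2 * n - 1), ocolsum n T j)
      = (n : ℤ) + ocolsum n T n := by
    rw [hA, hB, hCtail] at hsum_n
    linarith [hsum_n, htail, hS1, hS2, hS3, hS0]
  -- each column sum is 0 or 1
  have hg01 : ∀ j, 1 ≤ j → j ≤ 2 * n - 1 → ocolsum n T j = 0 ∨ ocolsum n T j = 1 := by
    intro j h1 h2
    rcases lt_trichotomy j n with hj | hj | hj
    · have halt := T.seqAlt j hj
      have hs := T.seqSum j hj
      unfold oseq at halt hs
      rw [List.append_assoc] at halt hs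
      have hpre := prefix01 _ _ halt hs
      rwa [hC j hj.le] at hpre
    · rw [hj]
      have hcc : (centerCol n T.a).sum = ocolsum n T n := by
        unfold centerCol
        rw [shiftSum (fun i => T.a i n) n]
        exact (hg' n).symm
      have halt := T.centerAlt
      unfold altList at halt
      rcases chainSum _ halt with ⟨h0, -⟩ | ⟨hh, -, -⟩
      · left
        rw [← hcc, ← sum_filter_nz (centerCol n T.a)]
        exact h0
      · cases hfE : (centerCol n T.a).filter (fun x => decide (x ≠ 0)) with
        | nil =>
          left
          rw [← hcc, ← sum_filter_nz (centerCol n T.a), hfE]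
          rfl
        | cons x l =>
          have hx : x = 1 := T.centerTop x (by rw [hfE]; rfl)
          right
          rw [hfE] at hh
          rw [← hcc, ← sum_filter_nz (centerCol n T.a), hfE, hh]
          simp [hx]
    · have hj0n : 2 * n - j < n := by omega
      have halt := T.seqAlt (2 * n - j) hj0n
      have hs := T.seqSum (2 * n - j) hj0n
      unfold oseq at halt hs
      have hsuf := suffix01 _ _ halt hs
      rw [hRev (2 * n - j) hj0n] at hsuf
      rwa [show 2 * n - (2 * n - j) = j from by omega] at hsuf
  have hgn01 := hg01 n hn (by omega)
  have hpar : ocolsum n T n = (if Even n then (0 : ℤ) else 1) := by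
    rcases hgn01 with h0 | h1
    · rw [h0] at key ⊢
      have hev : Even n := by rw [Nat.even_iff]; omega
      simp [hev]
    · rw [h1] at key ⊢
      have hev : ¬ Even n := by rw [Nat.even_iff]; omega
      simp [hev]
  refine ⟨hpar, ?_⟩
  have hmem : n ∈ Finset.Icc 1 (2 * n - 1) := by simp only [Finset.mem_Icc]; omega
  have herase : ∑ j ∈ (Finset.Icc 1 (2 * n - 1)).erase n, ocolsum n T j
      = (∑ j ∈ Finset.Icc 1 (2 * n - 1), ocolsum n T j) - ocolsum n T n := by
    rw [← Finset.sum_erase_add _ _ hmem]; ring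
  have hcount : ∑ j ∈ (Finset.Icc 1 (2 * n - 1)).erase n, ocolsum n T j
      = ((((Finset.Icc 1 (2 * n - 1)).erase n).filter (fun j => ocolsum n T j = 1)).card : ℤ) :=
    count01 _ _ (fun j hj => by
      have hj' := Finset.mem_erase.mp hj
      exact hg01 j (Finset.mem_Icc.mp hj'.2).1 (Finset.mem_Icc.mp hj'.2).2)
  have hfe : (Finset.Icc 1 (2 * n - 1)).filter (fun j => j ≠ n ∧ ocolsum n T j = 1)
      = ((Finset.Icc 1 (2 * n - 1)).erase n).filter (fun j => ocolsum n T j = 1) := by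
    ext x
    simp only [Finset.mem_filter, Finset.mem_erase]
    tauto
  rw [hfe]
  have hk : (((((Finset.Icc 1 (2 * n - 1)).erase n).filter (fun j => ocolsum n T j = 1)).card : ℤ))
      = (∑ j ∈ Finset.Icc 1 (2 * n - 1), ocolsum n T j) - ocolsum n T n := by
    rw [← hcount, herase]
  generalize hScard : (((Finset.Icc 1 (2 * n - 1)).erase n).filter
      (fun j => ocolsum n T j = 1)).card = k at hk ⊢
  generalize hSsum : (∑ j ∈ Finset.Icc 1 (2 * n - 1), ocolsum n T j) = S at key hk
  rcases hgn01 with h0 | h1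
  · rw [h0] at key hk
    omega
  · rw [h1] at key hk
    omega
end

section
/- For every integer n ≥ 1, the number of strictly increasing sequences 0 ≤ j_1 < j_2 < ... < j_{n-1} ≤ 2n−3 satisfying the Catalan-type condition |[n−1−i, n−2+i] ∩ {j_1,...,j_{n-1}}| ≥ i for all i ∈ {1,...,n−1}, equals the n-th Catalan number C_n = binom(2n,n)/(n+1). -/
open Finset

section Stmt13AuxSection
open DyckStep


namespace Stmt13Aux

def pos (m j : ℕ) : ℕ := if j % 2 = 0 then m + j / 2 else m - 1 - j / 2
def inv (m x : ℕ) : ℕ := if m ≤ x then 2 * (x - m) else 2 * (m - x) - 1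

lemma pos_lt {m j : ℕ} (hj : j < 2 * m) : pos m j < 2 * m := by unfold pos; split <;> omega
lemma inv_lt {m x : ℕ} (hx : x < 2 * m) : inv m x < 2 * m := by unfold inv; split <;> omega
lemma pos_inv {m x : ℕ} (hx : x < 2 * m) : pos m (inv m x) = x := by unfold pos inv; split_ifs <;> omega
lemma inv_pos {m j : ℕ} (hj : j < 2 * m) : inv m (pos m j) = j := by unfold pos inv; split_ifs <;> omega

/-- the step at index `k` of the word associated to `S` -/
def step (m : ℕ) (S : Finset (Fin (2 * m))) (k : ℕ) : DyckStep :=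
  if k = 0 then U
  else if k ≤ 2 * m then (if ∃ y ∈ S, (y : ℕ) = pos m (k - 1) then U else D)
  else D

def wordList (m : ℕ) (S : Finset (Fin (2 * m))) : List DyckStep :=
  (List.range (2 * m + 2)).map (step m S)

lemma length_wordList (m : ℕ) (S : Finset (Fin (2 * m))) :
    (wordList m S).length = 2 * m + 2 := by simp [wordList]

lemma count_map_range (f : ℕ → DyckStep) (a : DyckStep) (N : ℕ) :
    ((List.range N).map f).count a = ((Finset.range N).filter (fun k => f k = a)).card := by
  induction N with
  | zero => simp
  | succ N ih =>
    rw [List.range_succ, List.map_append, List.count_append, Finset.range_add_one,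
      Finset.filter_insert]
    by_cases h : f N = a
    · rw [if_pos h, Finset.card_insert_of_notMem (by simp), ih]
      simp [List.count_singleton', h]
    · rw [if_neg h, ih]
      simp [List.count_singleton', h]

lemma count_take_map_range (f : ℕ → DyckStep) (a : DyckStep) (t N : ℕ) :
    (((List.range N).map f).take t).count a
      = ((Finset.range (min t N)).filter (fun k => f k = a)).card := by
  rw [← List.map_take, List.take_range, count_map_range]


variable {m : ℕ} (S : Finset (Fin (2 * m)))

/-- number of `U`s among the middle positions `1..s` -/
def B (s : ℕ) : ℕ := ((Finset.range s).filter (fun j => ∃ y ∈ S, (y : ℕ) = pos m j)).card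

/-- cardinality of `S` intersected with the centered interval of half-width `i` -/
def A (i : ℕ) : ℕ := (S.filter (fun p : Fin (2 * m) => m - i ≤ (p : ℕ) ∧ (p : ℕ) ≤ m - 1 + i)).card

lemma B_even {i : ℕ} (hi : i ≤ m) : B S (2 * i) = A S i := by
  unfold A B
  symm
  refine Finset.card_bij (fun p _ => inv m (p : ℕ)) ?_ ?_ ?_
  · rintro p hp
    rw [Finset.mem_filter] at hp
    obtain ⟨hpS, h1, h2⟩ := hp
    rw [Finset.mem_filter, Finset.mem_range]
    refine ⟨?_, ⟨p, hpS, (pos_inv p.isLt).symm⟩⟩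
    have := p.isLt
    unfold inv; split <;> omega
  · rintro p1 hp1 p2 hp2 h
    have : pos m (inv m (p1 : ℕ)) = pos m (inv m (p2 : ℕ)) := by rw [h]
    rw [pos_inv p1.isLt, pos_inv p2.isLt] at this
    exact Fin.ext this
  · rintro j hj
    rw [Finset.mem_filter, Finset.mem_range] at hj
    obtain ⟨hj2i, y, hyS, hy⟩ := hj
    have hj2m : j < 2 * m := by omega
    refine ⟨y, Finset.mem_filter.mpr ⟨hyS, ?_, ?_⟩, ?_⟩
    · rw [hy]; unfold pos; split <;> omega
    · rw [hy]; unfold pos; split <;> omega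
    · rw [hy, inv_pos hj2m]

lemma B_mono {s t : ℕ} (h : s ≤ t) : B S s ≤ B S t :=
  Finset.card_le_card (Finset.filter_subset_filter _ (Finset.range_subset_range.mpr h))

lemma B_le (s : ℕ) : B S s ≤ s := le_trans (Finset.card_le_card (Finset.filter_subset _ _)) (by simp)

/-- the number of `U`s among the first `T` steps, for `1 ≤ T ≤ 2m+1` -/
lemma cardU_eq {T : ℕ} (hT1 : 1 ≤ T) (hT2 : T ≤ 2 * m + 1) :
    ((Finset.range T).filter (fun k => step m S k = U)).card = 1 + B S (T - 1) := by
  obtain ⟨s, rfl⟩ : ∃ s, T = s + 1 := ⟨T - 1, by omega⟩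
  have hstep0 : step m S 0 = U := by simp [step]
  have h1 : (Finset.range (s + 1)).filter (fun k => step m S k = U)
      = insert 0 ((Finset.range (s + 1)).filter (fun k => 1 ≤ k ∧ step m S k = U)) := by
    ext k
    simp only [Finset.mem_insert, Finset.mem_filter, Finset.mem_range]
    constructor
    · rintro ⟨hk, hu⟩
      rcases Nat.eq_zero_or_pos k with h | h
      · exact Or.inl h
      · exact Or.inr ⟨hk, h, hu⟩
    · rintro (rfl | ⟨hk, _, hu⟩)
      · exact ⟨by omega, hstep0⟩
      · exact ⟨hk, hu⟩
  rw [h1, Finset.card_insert_of_notMem (by simp), Nat.add_comm]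
  congr 1
  have h2 : (Finset.range (s + 1)).filter (fun k => 1 ≤ k ∧ step m S k = U)
      = (Finset.range (s + 1)).filter (fun k => 1 ≤ k ∧ ∃ y ∈ S, (y : ℕ) = pos m (k - 1)) := by
    apply Finset.filter_congr
    intro k hk
    rw [Finset.mem_range] at hk
    constructor
    · rintro ⟨h1k, hu⟩
      refine ⟨h1k, ?_⟩
      unfold step at hu
      rw [if_neg (by omega), if_pos (by omega)] at hu
      by_contra hP
      rw [if_neg hP] at hu
      exact absurd hu (by simp)
    · rintro ⟨h1k, hP⟩
      refine ⟨h1k, ?_⟩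
      unfold step
      rw [if_neg (by omega), if_pos (by omega), if_pos hP]
  rw [h2]
  unfold B
  show _ = ((Finset.range s).filter _).card
  refine Finset.card_bij (fun k _ => k - 1) ?_ ?_ ?_
  · rintro k hk
    rw [Finset.mem_filter, Finset.mem_range] at hk
    obtain ⟨hks, hk1, hkP⟩ := hk
    rw [Finset.mem_filter, Finset.mem_range]
    exact ⟨by omega, hkP⟩
  · rintro k1 hk1 k2 hk2 h
    rw [Finset.mem_filter, Finset.mem_range] at hk1 hk2
    obtain ⟨-, h11, -⟩ := hk1
    obtain ⟨-, h21, -⟩ := hk2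
    omega
  · rintro j hj
    rw [Finset.mem_filter, Finset.mem_range] at hj
    exact ⟨j + 1, Finset.mem_filter.mpr ⟨Finset.mem_range.mpr (by omega), by omega, hj.2⟩, by omega⟩

lemma dyckstep_eq_D_iff (s : DyckStep) : s = D ↔ ¬ s = U := by cases s <;> simp

lemma cardD_eq (T : ℕ) :
    ((Finset.range T).filter (fun k => step m S k = D)).card
      = T - ((Finset.range T).filter (fun k => step m S k = U)).card := by
  have := Finset.card_filter_add_card_filter_not
    (s := Finset.range T) (p := fun k => step m S k = U)
  have h2 : (Finset.range T).filter (fun k => ¬ step m S k = U)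
      = (Finset.range T).filter (fun k => step m S k = D) := by
    apply Finset.filter_congr; intro k _; rw [dyckstep_eq_D_iff]
  rw [h2] at this
  simp only [Finset.card_range] at this
  omega


lemma step_last : step m S (2 * m + 1) = D := by
  unfold step; rw [if_neg (by omega), if_neg (by omega)]

lemma cardU_top :
    ((Finset.range (2 * m + 2)).filter (fun k => step m S k = U)).card = 1 + B S (2 * m) := by
  have : Finset.range (2 * m + 2) = insert (2 * m + 1) (Finset.range (2 * m + 1)) := by
    rw [Finset.range_add_one]
  rw [this, Finset.filter_insert, if_neg (by rw [step_last]; simp),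
    cardU_eq S (by omega) (by omega)]
  simp

lemma A_top : A S m = S.card := by
  unfold A
  rw [Finset.filter_true_of_mem]
  intro p _
  have := p.isLt
  omega

/-- main count: number of `U`s in the whole word -/
lemma count_wordList_U (hS : S.card = m) : (wordList m S).count U = m + 1 := by
  rw [wordList, count_map_range, cardU_top, B_even S le_rfl, A_top, hS, Nat.add_comm]

lemma count_wordList_D (hS : S.card = m) : (wordList m S).count D = m + 1 := by
  rw [wordList, count_map_range, cardD_eq]
  have h := cardU_top S
  rw [B_even S le_rfl, A_top, hS] at h
  omega

lemma prefix_wordList (hS : S.card = m) (hA : ∀ i ∈ Finset.Icc 1 m, i ≤ A S i) (t : ℕ) :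
    ((wordList m S).take t).count D ≤ ((wordList m S).take t).count U := by
  rw [wordList, count_take_map_range, count_take_map_range, cardD_eq]
  set T := min t (2 * m + 2) with hT
  have hT2 : T ≤ 2 * m + 2 := by omega
  have hle : ((Finset.range T).filter (fun k => step m S k = U)).card ≤ T := by
    refine le_trans (Finset.card_le_card (Finset.filter_subset _ _)) (by simp)
  rcases Nat.eq_zero_or_pos T with h0 | h1
  · simp [h0]
  rcases Nat.lt_or_ge T (2 * m + 2) with hlt | hge
  · -- 1 ≤ T ≤ 2m+1
    rw [cardU_eq S h1 (by omega)]
    set j := (T - 1) / 2 with hj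
    have hjm : j ≤ m := by omega
    have hmono : B S (2 * j) ≤ B S (T - 1) := B_mono S (by omega)
    rw [B_even S hjm] at hmono
    rcases Nat.eq_zero_or_pos j with hj0 | hj1
    · omega
    · have := hA j (Finset.mem_Icc.mpr ⟨hj1, hjm⟩)
      omega
  · have hTeq : T = 2 * m + 2 := by omega
    rw [hTeq, cardU_top]
    have h2 : B S (2 * m) = A S m := B_even S le_rfl
    rw [A_top, hS] at h2
    omega


def toDyck (hS : S.card = m) (hA : ∀ i ∈ Finset.Icc 1 m, i ≤ A S i) : DyckWord :=
  ⟨wordList m S, by rw [count_wordList_U S hS, count_wordList_D S hS],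
   fun t => prefix_wordList S hS hA t⟩

lemma semilength_toDyck (hS : S.card = m) (hA : ∀ i ∈ Finset.Icc 1 m, i ≤ A S i) :
    (toDyck S hS hA).semilength = m + 1 := by
  rw [DyckWord.semilength]
  exact count_wordList_U S hS

lemma exists_mem_iff (x : Fin (2 * m)) : (∃ y ∈ S, (y : ℕ) = (x : ℕ)) ↔ x ∈ S :=
  ⟨fun ⟨y, hy, he⟩ => (Fin.ext he : y = x) ▸ hy, fun h => ⟨x, h, rfl⟩⟩

lemma step_at_inv (x : Fin (2 * m)) :
    step m S (inv m (x : ℕ) + 1) = if x ∈ S then U else D := by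
  have hx := x.isLt
  have hinv := inv_lt hx
  unfold step
  rw [if_neg (by omega), if_pos (by omega)]
  refine if_congr ?_ rfl rfl
  rw [Nat.add_sub_cancel, pos_inv hx]
  exact exists_mem_iff S x

lemma wordList_inj {S1 S2 : Finset (Fin (2 * m))} (h : wordList m S1 = wordList m S2) :
    S1 = S2 := by
  ext x
  have hx := x.isLt
  have hinv := inv_lt hx
  have hk : inv m (x : ℕ) + 1 < 2 * m + 2 := by omega
  have h2 := congrArg (fun l => l[inv m (x : ℕ) + 1]?) h
  simp only [wordList, List.getElem?_map, List.getElem?_range hk, Option.map_some,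
    Option.some.injEq] at h2
  rw [step_at_inv S1 x, step_at_inv S2 x] at h2
  by_cases h1 : x ∈ S1 <;> by_cases h3 : x ∈ S2 <;> simp [h1, h3] at h2 ⊢

/-- inverse map: the subset extracted from a Dyck word -/
def ofDyck (p : DyckWord) : Finset (Fin (2 * m)) :=
  Finset.univ.filter (fun x => p.toList.getD (inv m (x : ℕ) + 1) U = U)

lemma wordList_ofDyck (p : DyckWord) (hp : p.semilength = m + 1) :
    wordList m (ofDyck (m := m) p) = p.toList := by
  have hlen : p.toList.length = 2 * m + 2 := by
    have := p.two_mul_semilength_eq_length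
    omega
  have hne : p.toList ≠ [] := by
    intro h; rw [h] at hlen; simp at hlen
  apply List.ext_getElem (by rw [length_wordList, hlen])
  intro k hk1 hk2
  rw [length_wordList] at hk1
  simp only [wordList, List.getElem_map, List.getElem_range]
  rcases Nat.eq_zero_or_pos k with rfl | hk0
  · rw [List.getElem_zero, p.head_eq_U hne]
    simp [step]
  rcases Nat.lt_or_ge k (2 * m + 1) with hklt | hkge
  · -- middle positions
    have hkm : k ≤ 2 * m := by omega
    have hpos : pos m (k - 1) < 2 * m := pos_lt (by omega)
    set x : Fin (2 * m) := ⟨pos m (k - 1), hpos⟩ with hxdef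
    have hkp : k < p.toList.length := by omega
    have hgd : p.toList.getD k U = p.toList[k] := List.getD_eq_getElem _ U hkp
    have hmem : x ∈ ofDyck (m := m) p ↔ p.toList[k] = U := by
      rw [ofDyck, Finset.mem_filter]
      have : inv m (x : ℕ) + 1 = k := by
        rw [hxdef]
        simp only
        rw [inv_pos (by omega)]
        omega
      rw [this, hgd]
      simp
    unfold step
    rw [if_neg (by omega), if_pos hkm]
    have hx : (∃ y ∈ ofDyck (m := m) p, (y : ℕ) = pos m (k - 1)) ↔ x ∈ ofDyck (m := m) p :=
      exists_mem_iff _ x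
    rcases (p.toList[k]).dichotomy with hU | hD
    · rw [hU, if_pos (hx.mpr (hmem.mpr hU))]
    · rw [hD, if_neg ?_]
      intro hcon
      have := hmem.mp (hx.mp hcon)
      rw [hD] at this
      exact absurd this (by simp)
  · -- last position
    have hkeq : k = 2 * m + 1 := by omega
    subst hkeq
    rw [step_last]
    have hlast := p.getLast_eq_D hne
    rw [List.getLast_eq_getElem] at hlast
    convert hlast.symm using 2
    omega

lemma card_ofDyck (p : DyckWord) (hp : p.semilength = m + 1) :
    (ofDyck (m := m) p).card = m := by
  have hw := wordList_ofDyck p hp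
  have hcu : p.toList.count U = m + 1 := by rw [← hp]; rfl
  rw [← hw, wordList, count_map_range, cardU_top, B_even _ le_rfl, A_top] at hcu
  omega

lemma cond_ofDyck (p : DyckWord) (hp : p.semilength = m + 1) :
    ∀ i ∈ Finset.Icc 1 m, i ≤ A (ofDyck (m := m) p) i := by
  intro i hi
  rw [Finset.mem_Icc] at hi
  have hw := wordList_ofDyck p hp
  have hpre := p.count_D_le_count_U (2 * i + 1)
  rw [← hw, wordList, count_take_map_range, count_take_map_range, cardD_eq,
    cardU_eq _ (by omega) (by omega)] at hpre
  have hTeq : min (2 * i + 1) (2 * m + 2) = 2 * i + 1 := by omega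
  rw [hTeq] at hpre
  have hB : B (ofDyck (m := m) p) (2 * i + 1 - 1) = A (ofDyck (m := m) p) i := by
    have : 2 * i + 1 - 1 = 2 * i := by omega
    rw [this, B_even _ (by omega)]
  rw [hB] at hpre
  have hle : ((Finset.range (2 * i + 1)).filter
      (fun k => step m (ofDyck (m := m) p) k = U)).card ≤ 2 * i + 1 := by
    refine le_trans (Finset.card_le_card (Finset.filter_subset _ _)) (by simp)
  rw [cardU_eq _ (by omega) (by omega), hB] at hle
  omega


lemma key (m : ℕ) :
    ((Finset.univ : Finset (Finset (Fin (2 * m)))).filter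
      (fun S => S.card = m ∧
        ∀ i ∈ Finset.Icc 1 m,
          i ≤ (S.filter (fun p : Fin (2 * m) => m - i ≤ (p : ℕ) ∧ (p : ℕ) ≤ m - 1 + i)).card)).card
    = catalan (m + 1) := by
  rw [← DyckWord.card_dyckWord_semilength_eq_catalan (m + 1), ← Fintype.card_subtype]
  refine Fintype.card_congr (Equiv.ofBijective
    (fun S => ⟨toDyck S.1 S.2.1 S.2.2, semilength_toDyck _ _ _⟩) ⟨?_, ?_⟩)
  · intro S1 S2 h
    apply Subtype.ext
    apply wordList_inj (m := m)
    exact congrArg (fun q : {p : DyckWord // p.semilength = m + 1} => q.1.toList) h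
  · rintro ⟨p, hp⟩
    refine ⟨⟨ofDyck (m := m) p, card_ofDyck p hp, cond_ofDyck p hp⟩, ?_⟩
    apply Subtype.ext
    apply DyckWord.ext
    exact wordList_ofDyck p hp

end Stmt13Aux

end Stmt13AuxSection

/-- The number of `(n−1)`-element subsets `{j_1 < … < j_{n-1}}` of
`{0,…,2n−3}` with `|[n−1−i, n−2+i] ∩ {j_1,…,j_{n-1}}| ≥ i` for all `1 ≤ i ≤ n−1`
equals the `n`-th Catalan number. -/
theorem stmt13 (n : ℕ) (hn : 1 ≤ n) :
    ((Finset.univ : Finset (Finset (Fin (2 * n - 2)))).filter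
      (fun S => S.card = n - 1 ∧
        ∀ i ∈ Finset.Icc 1 (n - 1),
          i ≤ (S.filter (fun p : Fin (2 * n - 2) => n - 1 - i ≤ (p : ℕ) ∧ (p : ℕ) ≤ n - 2 + i)).card)).card
    = catalan n := by
  obtain ⟨m, rfl⟩ : ∃ m, n = m + 1 := ⟨n - 1, by omega⟩
  have h1 : 2 * (m + 1) - 2 = 2 * m := by omega
  have h2 : m + 1 - 1 = m := by omega
  have h3 : m + 1 - 2 = m - 1 := by omega
  simp only [h1, h2, h3]
  exact Stmt13Aux.key m
end
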